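/- arXiv:2103.06424 — 7 statements merged into one kernel-verified Lean document; each statement's English description precedes it below -/
import Mathlib

section
/- Let κ > 0 and δ > 0 with κδ < π/2. Then every complex number λ satisfying the characteristic equation λ + κ e^{−δλ} = 0 has strictly negative real part. -/
/-- **Stability of the delayed replicator dynamics.**
If `κ > 0`, `δ > 0` and `κδ < π/2`, then every complex root `z` of the
characteristic equation `z + κ e^{−δz} = 0` has strictly negative real part. -/
theorem stmt_2 (κ δ : ℝ) (hκ : 0 < κ) (hδ : 0 < δ) (h : κ * δ < Real.pi / 2) :
    ∀ z : ℂ, z + (κ : ℂ) * Complex.exp (-(δ : ℂ) * z) = 0 → z.re < 0 := by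
  intro z hz
  by_contra h0
  push_neg at h0
  set x := z.re with hx
  set y := z.im with hy
  have hwre : ((-(δ : ℂ)) * z).re = -δ * x := by
    simp [Complex.mul_re, hx]
  have hwim : ((-(δ : ℂ)) * z).im = -δ * y := by
    simp [Complex.mul_im, hy]
  -- modulus identity
  have hzeq : z = -((κ : ℂ) * Complex.exp (-(δ : ℂ) * z)) := by
    linear_combination hz
  have habs : ‖z‖ = κ * Real.exp (-δ * x) := by
    rw [hzeq, norm_neg, norm_mul, Complex.norm_exp, hwre,
      Complex.norm_real, Real.norm_eq_abs, abs_of_pos hκ]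
  have hexp1 : Real.exp (-δ * x) ≤ 1 := by
    rw [← Real.exp_zero]
    exact Real.exp_le_exp.mpr (by nlinarith)
  have hyb : |y| ≤ κ := by
    calc |y| ≤ ‖z‖ := Complex.abs_im_le_norm z
    _ = κ * Real.exp (-δ * x) := habs
    _ ≤ κ * 1 := by nlinarith
    _ = κ := mul_one κ
  have hcos : 0 < Real.cos (-δ * y) := by
    apply Real.cos_pos_of_mem_Ioo
    constructor
    · have : |(-δ * y)| < Real.pi / 2 := by
        rw [abs_mul, abs_neg, abs_of_pos hδ]
        calc δ * |y| ≤ δ * κ := by nlinarith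
        _ < Real.pi / 2 := by linarith
      linarith [abs_lt.mp this |>.1]
    · have : |(-δ * y)| < Real.pi / 2 := by
        rw [abs_mul, abs_neg, abs_of_pos hδ]
        calc δ * |y| ≤ δ * κ := by nlinarith
        _ < Real.pi / 2 := by linarith
      linarith [abs_lt.mp this |>.2]
  -- real part of the equation
  have hre : x + κ * (Real.exp (-δ * x) * Real.cos (-δ * y)) = 0 := by
    have := congrArg Complex.re hz
    simpa [Complex.add_re, Complex.mul_re, Complex.exp_re, Complex.exp_im,
      hwre, hwim] using this
  nlinarith [mul_pos hκ (mul_pos (Real.exp_pos (-δ * x)) hcos)]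
end

section
/- Let κ > 0 and δ > 0 with κδ > π/2. Then there exists a complex number λ with strictly positive real part satisfying the characteristic equation λ + κ e^{−δλ} = 0. -/
open Real

/-- **Instability beyond the threshold `δ* = π/(2κ)`.**
If `κ > 0`, `δ > 0` and `κδ > π/2`, then the characteristic equation
`λ + κ e^{−δλ} = 0` has a root with strictly positive real part. -/
theorem stmt_4 (κ δ : ℝ) (hκ : 0 < κ) (hδ : 0 < δ) (h : Real.pi / 2 < κ * δ) :
    ∃ z : ℂ, 0 < z.re ∧ z + (κ : ℂ) * Complex.exp (-(δ : ℂ) * z) = 0 := by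
  have hπ := Real.pi_pos
  set ε : ℝ := min (π/4) (π/(2*(κ*δ))) with hεdef
  have hε0 : 0 < ε := lt_min (by linarith) (by positivity)
  have hε4 : ε ≤ π/4 := min_le_left _ _
  have hε2 : κ * ε ≤ π/(2*δ) := by
    have h1 : ε ≤ π/(2*(κ*δ)) := min_le_right _ _
    calc κ * ε ≤ κ * (π/(2*(κ*δ))) := by nlinarith
    _ = π/(2*δ) := by field_simp
  set b : ℝ := π - ε with hbdef
  have hb1 : π/2 < b := by
    have : ε < π/2 := lt_of_le_of_lt hε4 (by linarith)
    simp only [hbdef]; linarith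
  have hb2 : b < π := by simp only [hbdef]; linarith
  set f : ℝ → ℝ := fun t => κ * Real.sin t * Real.exp (t * (Real.cos t / Real.sin t)) - t/δ
    with hfdef
  -- continuity on [π/2, b]
  have hsinpos : ∀ t ∈ Set.Icc (π/2) b, 0 < Real.sin t := by
    intro t ht
    exact Real.sin_pos_of_pos_of_lt_pi (lt_of_lt_of_le (by linarith) ht.1)
      (lt_of_le_of_lt ht.2 hb2)
  have hcont : ContinuousOn f (Set.Icc (π/2) b) := by
    apply ContinuousOn.sub
    · apply ContinuousOn.mul
      · exact (continuous_const.mul Real.continuous_sin).continuousOn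
      · apply Real.continuous_exp.comp_continuousOn
        apply ContinuousOn.mul continuousOn_id
        exact ContinuousOn.div Real.continuous_cos.continuousOn
          Real.continuous_sin.continuousOn (fun t ht => (hsinpos t ht).ne')
    · exact (continuous_id.div_const δ).continuousOn
  -- endpoint values
  have hfa : 0 < f (π/2) := by
    simp only [hfdef, Real.sin_pi_div_two, Real.cos_pi_div_two]
    simp only [zero_div, mul_zero, Real.exp_zero, mul_one]
    have h2 : π/2/δ < κ := (div_lt_iff₀ hδ).mpr (by linarith)
    linarith
  have hfb : f b < 0 := by
    have hsb : Real.sin b = Real.sin ε := by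
      simp only [hbdef]; rw [Real.sin_pi_sub]
    have hsinb : 0 < Real.sin b := hsinpos b ⟨le_of_lt hb1, le_refl _⟩
    have hcosb : Real.cos b < 0 := Real.cos_neg_of_pi_div_two_lt_of_lt hb1 (by linarith)
    have hexp : Real.exp (b * (Real.cos b / Real.sin b)) ≤ 1 := by
      apply Real.exp_le_one_iff.mpr
      apply mul_nonpos_of_nonneg_of_nonpos (by linarith)
      exact le_of_lt (div_neg_of_neg_of_pos hcosb hsinb)
    have hsinle : Real.sin b ≤ ε := by rw [hsb]; exact Real.sin_le (le_of_lt hε0)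
    have h1 : κ * Real.sin b * Real.exp (b * (Real.cos b / Real.sin b)) ≤ κ * ε := by
      calc κ * Real.sin b * Real.exp (b * (Real.cos b / Real.sin b))
          ≤ κ * Real.sin b * 1 := by
            apply mul_le_mul_of_nonneg_left hexp; positivity
        _ = κ * Real.sin b := by ring
        _ ≤ κ * ε := by nlinarith
    have h2 : π/(2*δ) < b/δ := by
      rw [div_lt_div_iff₀ (by positivity) hδ]
      have : π/2 < b := hb1
      nlinarith
    simp only [hfdef]
    have : κ * ε < b / δ := lt_of_le_of_lt hε2 h2
    linarith
  -- IVT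
  obtain ⟨t, ht, hft⟩ : ∃ t ∈ Set.Icc (π/2) b, f t = 0 := by
    have := intermediate_value_Icc' (le_of_lt hb1) hcont
    have h0 : (0:ℝ) ∈ Set.Icc (f b) (f (π/2)) := ⟨le_of_lt hfb, le_of_lt hfa⟩
    obtain ⟨t, ht, hft⟩ := this h0
    exact ⟨t, ht, hft⟩
  have hsint : 0 < Real.sin t := hsinpos t ht
  have htne : t ≠ π/2 := by
    intro he; rw [he] at hft; linarith
  have htgt : π/2 < t := lt_of_le_of_ne ht.1 (Ne.symm htne)
  have hcost : Real.cos t < 0 :=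
    Real.cos_neg_of_pi_div_two_lt_of_lt htgt (by linarith [ht.2, hb2])
  -- construct root
  set c : ℝ := Real.cos t / Real.sin t with hcdef
  have hcneg : c < 0 := div_neg_of_neg_of_pos hcost hsint
  set y : ℝ := t / δ with hydef
  set x : ℝ := -(t/δ) * c with hxdef
  have ht0 : 0 < t := lt_trans (by linarith) htgt
  have hypos : 0 < y := div_pos ht0 hδ
  have hxpos : 0 < x := by
    simp only [hxdef]
    have : 0 < t/δ := by positivity
    nlinarith
  have key : κ * Real.sin t * Real.exp (t * c) = y := by
    have := hft
    simp only [hfdef, hcdef, hydef] at *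
    linarith
  refine ⟨(x:ℂ) + (y:ℂ) * Complex.I, by simp [hxpos], ?_⟩
  have hz : -(δ:ℂ) * ((x:ℂ) + (y:ℂ) * Complex.I)
      = ((-(δ*x) : ℝ):ℂ) + (((-(δ*y)) : ℝ):ℂ) * Complex.I := by
    push_cast; ring
  have e1 : -(δ*x) = t * c := by
    simp only [hxdef]; field_simp
  have e2 : δ * y = t := by
    simp only [hydef]; field_simp
  rw [hz, Complex.exp_add, Complex.exp_mul_I, Complex.ext_iff]
  simp only [Complex.add_re, Complex.add_im, Complex.mul_re, Complex.mul_im,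
    Complex.exp_ofReal_re, Complex.exp_ofReal_im, Complex.ofReal_re, Complex.ofReal_im,
    Complex.I_re, Complex.I_im, Complex.cos_ofReal_re, Complex.cos_ofReal_im,
    Complex.sin_ofReal_re, Complex.sin_ofReal_im, Complex.zero_re, Complex.zero_im]
  have e3 : -(δ*y) = -t := by rw [e2]
  have hx2 : x * Real.sin t = -(y * Real.cos t) := by
    simp only [hxdef, hydef, hcdef]
    field_simp
  rw [e1, e3, Real.cos_neg, Real.sin_neg]
  constructor
  · have h2 : (x + κ * (Real.exp (t*c) * Real.cos t)) * Real.sin t = 0 := by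
      linear_combination Real.cos t * key + hx2
    have h3 : x + κ * (Real.exp (t*c) * Real.cos t) = 0 :=
      (mul_eq_zero.mp h2).resolve_right hsint.ne'
    linear_combination h3
  · linear_combination -key
end

section
/- Let β > 0, μ > 0, T > 0, and let f : [0,T] → ℝ be a nonnegative integrable function. Then ∫₀ᵀ e^{−μt} (I^β f)(t) dt ≤ μ^{−β} ∫₀ᵀ e^{−μt} f(t) dt. -/
open MeasureTheory Set Filter

/-- **Weighted-norm bound for the Riemann–Liouville fractional integral.**
For `β > 0`, `μ > 0`, `T > 0` and a nonnegative integrable `f : [0,T] → ℝ`,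
`∫₀ᵀ e^{−μt} (I^β f)(t) dt ≤ μ^{−β} ∫₀ᵀ e^{−μt} f(t) dt`, where
`(I^β f)(t) = (1/Γ(β)) ∫₀ᵗ (t−s)^{β−1} f(s) ds`. -/
theorem stmt_5 (β μ T : ℝ) (hβ : 0 < β) (hμ : 0 < μ) (hT : 0 < T)
    (f : ℝ → ℝ)
    (hf_nonneg : ∀ t ∈ Set.Icc (0:ℝ) T, 0 ≤ f t)
    (hf_int : MeasureTheory.IntegrableOn f (Set.Icc (0:ℝ) T)) :
    (∫ t in (0:ℝ)..T, Real.exp (-μ * t) *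
        ((1 / Real.Gamma β) * ∫ s in (0:ℝ)..t, (t - s) ^ (β - 1) * f s))
      ≤ μ ^ (-β) * ∫ t in (0:ℝ)..T, Real.exp (-μ * t) * f t := by
  have hΓ : 0 < Real.Gamma β := Real.Gamma_pos_of_pos hβ
  -- a measurable, everywhere-nonnegative representative of the truncation of `f`
  have hfI_int : Integrable ((Set.Icc (0:ℝ) T).indicator f) :=
    (integrable_indicator_iff measurableSet_Icc).mpr hf_int
  have hfI_nonneg : ∀ x, 0 ≤ (Set.Icc (0:ℝ) T).indicator f x := by
    intro x
    by_cases hx : x ∈ Set.Icc (0:ℝ) T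
    · simpa [Set.indicator_of_mem hx] using hf_nonneg x hx
    · simp [Set.indicator_of_notMem hx]
  obtain ⟨g, hg_meas, hg_nonneg, hg_ae⟩ :
      ∃ g : ℝ → ℝ, Measurable g ∧ (∀ x, 0 ≤ g x) ∧
        g =ᵐ[volume] (Set.Icc (0:ℝ) T).indicator f := by
    refine ⟨fun x => max (hfI_int.1.mk _ x) 0,
      hfI_int.1.stronglyMeasurable_mk.measurable.max measurable_const,
      fun x => le_max_right _ _, ?_⟩
    filter_upwards [hfI_int.1.ae_eq_mk] with x hx
    rw [← hx, max_eq_left (hfI_nonneg x)]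
  have hg_int : Integrable g := hfI_int.congr hg_ae.symm
  set c : ℝ := (1/μ) ^ β * Real.Gamma β with hc
  have hc_nonneg : 0 ≤ c := by positivity
  -- the kernel as an `ℝ≥0∞`-valued function on the product
  set K : ℝ × ℝ → ENNReal := fun p =>
    {q : ℝ × ℝ | q.2 ∈ Set.Ioc (0:ℝ) q.1}.indicator
      (fun q => ENNReal.ofReal ((q.1 - q.2) ^ (β - 1) * g q.2)) p with hK
  have hSmeas : MeasurableSet {q : ℝ × ℝ | q.2 ∈ Set.Ioc (0:ℝ) q.1} := by
    have : {q : ℝ × ℝ | q.2 ∈ Set.Ioc (0:ℝ) q.1}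
        = {q : ℝ × ℝ | (0:ℝ) < q.2} ∩ {q : ℝ × ℝ | q.2 ≤ q.1} := by
      ext q; simp [Set.mem_Ioc]
    rw [this]
    exact (measurableSet_lt measurable_const measurable_snd).inter
      (measurableSet_le measurable_snd measurable_fst)
  have hK_meas : Measurable K := by
    refine Measurable.indicator ?_ hSmeas
    apply Measurable.ennreal_ofReal
    exact ((by fun_prop : Measurable fun q : ℝ × ℝ => (q.1 - q.2) ^ (β - 1))).mul
      (hg_meas.comp measurable_snd)
  have hK_pos : ∀ t s : ℝ, s ∈ Set.Ioc (0:ℝ) t →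
      K (t, s) = ENNReal.ofReal ((t - s) ^ (β - 1) * g s) := by
    intro t s hs
    simp only [hK]
    rw [Set.indicator_of_mem (by simpa using hs)]
  have hK_zero : ∀ t s : ℝ, s ∉ Set.Ioc (0:ℝ) t → K (t, s) = 0 := by
    intro t s hs
    simp only [hK]
    rw [Set.indicator_of_notMem (by simpa using hs)]
  set J : ℝ → ENNReal := fun t => ∫⁻ s, K (t, s) with hJ
  have hJ_meas : Measurable J := hK_meas.lintegral_prod_right'
  have hJ_eq : ∀ t : ℝ,
      J t = ∫⁻ s in Set.Ioc 0 t, ENNReal.ofReal ((t - s) ^ (β - 1) * g s) := by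
    intro t
    rw [show J t = ∫⁻ s, K (t, s) from rfl, ← lintegral_indicator measurableSet_Ioc]
    refine lintegral_congr fun s => ?_
    by_cases hs : s ∈ Set.Ioc (0:ℝ) t
    · rw [Set.indicator_of_mem hs, hK_pos t s hs]
    · rw [Set.indicator_of_notMem hs, hK_zero t s hs]
  set Ψ : ℝ → ℝ := fun t => Real.exp (-μ * t) * (1 / Real.Gamma β * (J t).toReal) with hΨ
  have hΨ_meas : Measurable Ψ := by
    exact ((measurable_const.mul measurable_id).exp).mul
      (measurable_const.mul hJ_meas.ennreal_toReal)
  have hΨ_nonneg : ∀ t, 0 ≤ Ψ t := fun t =>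
    mul_nonneg (Real.exp_nonneg _) (mul_nonneg (by positivity) ENNReal.toReal_nonneg)
  -- rewrite both sides as set integrals over `Ioc 0 T` involving `g`, `Ψ`
  rw [intervalIntegral.integral_of_le hT.le, intervalIntegral.integral_of_le hT.le]
  have hRHS : ∫ t in Set.Ioc (0:ℝ) T, Real.exp (-μ * t) * f t
      = ∫ t in Set.Ioc (0:ℝ) T, Real.exp (-μ * t) * g t := by
    refine setIntegral_congr_ae measurableSet_Ioc ?_
    filter_upwards [hg_ae] with t ht hmem
    rw [ht, Set.indicator_of_mem (Set.mem_Icc.mpr ⟨hmem.1.le, hmem.2⟩)]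
  have hLHS : ∫ t in Set.Ioc (0:ℝ) T, Real.exp (-μ * t) *
        ((1 / Real.Gamma β) * ∫ s in (0:ℝ)..t, (t - s) ^ (β - 1) * f s)
      = ∫ t in Set.Ioc (0:ℝ) T, Ψ t := by
    refine setIntegral_congr_fun measurableSet_Ioc fun t ht => ?_
    have h1 : ∫ s in (0:ℝ)..t, (t - s) ^ (β - 1) * f s
        = ∫ s in (0:ℝ)..t, (t - s) ^ (β - 1) * g s := by
      refine intervalIntegral.integral_congr_ae ?_
      filter_upwards [hg_ae] with s hs hmem
      rw [Set.uIoc_of_le ht.1.le] at hmem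
      rw [hs, Set.indicator_of_mem (Set.mem_Icc.mpr ⟨hmem.1.le, hmem.2.trans ht.2⟩)]
    have h2 : ∫ s in (0:ℝ)..t, (t - s) ^ (β - 1) * g s = (J t).toReal := by
      rw [intervalIntegral.integral_of_le ht.1.le, hJ_eq t]
      rw [integral_eq_lintegral_of_nonneg_ae]
      · exact (ae_restrict_iff' measurableSet_Ioc).mpr (Eventually.of_forall fun s hs =>
          mul_nonneg (Real.rpow_nonneg (by linarith [hs.2]) _) (hg_nonneg s))
      · exact ((by fun_prop : Measurable fun s : ℝ => (t - s) ^ (β - 1)).mul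
          hg_meas).aestronglyMeasurable
    simp only [hΨ]
    rw [h1, h2]
  rw [hLHS, hRHS]
  -- integrability of `t ↦ exp (-μ t) * g t` on `Ioc 0 T`
  have hexpg_meas : Measurable fun t : ℝ => Real.exp (-μ * t) * g t :=
    ((measurable_const.mul measurable_id).exp).mul hg_meas
  have hexpg_int : IntegrableOn (fun t => Real.exp (-μ * t) * g t) (Set.Ioc (0:ℝ) T) := by
    refine Integrable.mono hg_int.integrableOn hexpg_meas.aestronglyMeasurable ?_
    rw [ae_restrict_iff' measurableSet_Ioc]
    refine Eventually.of_forall fun t ht => ?_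
    have h1 : Real.exp (-μ * t) ≤ 1 := Real.exp_le_one_iff.mpr (by nlinarith [ht.1])
    rw [Real.norm_eq_abs, Real.norm_eq_abs,
      abs_of_nonneg (mul_nonneg (Real.exp_nonneg _) (hg_nonneg t)),
      abs_of_nonneg (hg_nonneg t)]
    exact mul_le_of_le_one_left (hg_nonneg t) h1
  set R : ℝ := ∫ t in Set.Ioc (0:ℝ) T, Real.exp (-μ * t) * g t with hR
  have hR_nonneg : 0 ≤ R :=
    setIntegral_nonneg measurableSet_Ioc fun t _ =>
      mul_nonneg (Real.exp_nonneg _) (hg_nonneg t)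
  have hL : ∫⁻ s in Set.Ioc (0:ℝ) T, ENNReal.ofReal (Real.exp (-μ * s) * g s)
      = ENNReal.ofReal R := by
    rw [hR]
    exact (ofReal_integral_eq_lintegral_ofReal hexpg_int
      ((ae_restrict_iff' measurableSet_Ioc).mpr (Eventually.of_forall fun s _ =>
        mul_nonneg (Real.exp_nonneg _) (hg_nonneg s)))).symm
  -- the Gamma-integral value
  have hV : ∫⁻ u in Set.Ioi (0:ℝ),
      ENNReal.ofReal (Real.exp (-μ * u)) * ENNReal.ofReal (u ^ (β - 1))
      = ENNReal.ofReal c := by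
    have hint : IntegrableOn (fun u : ℝ => u ^ (β - 1) * Real.exp (-μ * u)) (Set.Ioi 0) := by
      have := integrableOn_rpow_mul_exp_neg_mul_rpow
        (show (-1:ℝ) < β - 1 by linarith) (p := 1) one_pos hμ
      simpa [Real.rpow_one] using this
    have hnn : 0 ≤ᵐ[volume.restrict (Set.Ioi (0:ℝ))]
        fun u : ℝ => u ^ (β - 1) * Real.exp (-μ * u) :=
      (ae_restrict_iff' measurableSet_Ioi).mpr (Eventually.of_forall fun u hu =>
        mul_nonneg (Real.rpow_nonneg (le_of_lt hu) _) (Real.exp_nonneg _))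
    have hval : ∫ u in Set.Ioi (0:ℝ), u ^ (β - 1) * Real.exp (-μ * u) = c := by
      rw [hc, ← Real.integral_rpow_mul_exp_neg_mul_Ioi hβ hμ]
      refine setIntegral_congr_fun measurableSet_Ioi fun u _ => ?_
      rw [neg_mul]
    have h3 := ofReal_integral_eq_lintegral_ofReal hint hnn
    have h6 : ∫⁻ u in Set.Ioi (0:ℝ),
        ENNReal.ofReal (Real.exp (-μ * u)) * ENNReal.ofReal (u ^ (β - 1))
        = ∫⁻ u in Set.Ioi (0:ℝ), ENNReal.ofReal (u ^ (β - 1) * Real.exp (-μ * u)) :=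
      lintegral_congr fun u => by
        rw [← ENNReal.ofReal_mul (Real.exp_nonneg _), mul_comm]
    rw [h6, ← h3, hval]
  -- the shifted Gamma integral
  have hshift : ∀ s : ℝ, ∫⁻ t in Set.Ioi s,
      ENNReal.ofReal (Real.exp (-μ * t)) * ENNReal.ofReal ((t - s) ^ (β - 1))
      = ENNReal.ofReal (Real.exp (-μ * s)) * ENNReal.ofReal c := by
    intro s
    have hmp := MeasureTheory.measurePreserving_add_right (volume : Measure ℝ) s
    have hpre : (fun x : ℝ => x + s) ⁻¹' (Set.Ioi s) = Set.Ioi 0 := by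
      ext u; simp [Set.mem_Ioi]
    have h4 := hmp.setLIntegral_comp_preimage_emb (measurableEmbedding_addRight s)
      (fun t => ENNReal.ofReal (Real.exp (-μ * t)) * ENNReal.ofReal ((t - s) ^ (β - 1)))
      (Set.Ioi s)
    rw [hpre] at h4
    rw [← h4]
    have heq : ∀ u : ℝ,
        ENNReal.ofReal (Real.exp (-μ * (u + s))) * ENNReal.ofReal ((u + s - s) ^ (β - 1))
        = ENNReal.ofReal (Real.exp (-μ * s)) *
            (ENNReal.ofReal (Real.exp (-μ * u)) * ENNReal.ofReal (u ^ (β - 1))) := by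
      intro u
      rw [add_sub_cancel_right, show -μ * (u + s) = -μ * u + -μ * s by ring,
        Real.exp_add, ENNReal.ofReal_mul (Real.exp_nonneg _)]
      ring
    simp_rw [heq]
    rw [lintegral_const_mul' _ _ ENNReal.ofReal_ne_top, hV]
  -- pointwise (in `s`) bound on the swapped integral
  have hsb : ∀ s ∈ Set.Ioc (0:ℝ) T,
      (∫⁻ t in Set.Ioc (0:ℝ) T, ENNReal.ofReal (Real.exp (-μ * t)) * K (t, s))
      ≤ ENNReal.ofReal c * ENNReal.ofReal (Real.exp (-μ * s) * g s) := by
    intro s hs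
    have hKs : ∀ t : ℝ, ENNReal.ofReal (Real.exp (-μ * t)) * K (t, s)
        = (Set.Ici s).indicator (fun t => ENNReal.ofReal (Real.exp (-μ * t)) *
            ENNReal.ofReal ((t - s) ^ (β - 1) * g s)) t := by
      intro t
      by_cases h : s ≤ t
      · rw [Set.indicator_of_mem (Set.mem_Ici.mpr h), hK_pos t s ⟨hs.1, h⟩]
      · rw [Set.indicator_of_notMem (fun hm => h (Set.mem_Ici.mp hm)),
          hK_zero t s (fun hmem => h hmem.2), mul_zero]
    calc ∫⁻ t in Set.Ioc (0:ℝ) T, ENNReal.ofReal (Real.exp (-μ * t)) * K (t, s)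
        = ∫⁻ t in Set.Ici s ∩ Set.Ioc (0:ℝ) T,
            ENNReal.ofReal (Real.exp (-μ * t)) *
              ENNReal.ofReal ((t - s) ^ (β - 1) * g s) := by
          simp_rw [hKs]
          rw [lintegral_indicator measurableSet_Ici, Measure.restrict_restrict measurableSet_Ici]
      _ ≤ ∫⁻ t in Set.Ioi s, ENNReal.ofReal (Real.exp (-μ * t)) *
              ENNReal.ofReal ((t - s) ^ (β - 1) * g s) := by
          refine le_trans (lintegral_mono'
            (Measure.restrict_mono Set.inter_subset_left le_rfl) le_rfl) ?_
          exact le_of_eq (setLIntegral_congr Ioi_ae_eq_Ici).symm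
      _ = (∫⁻ t in Set.Ioi s, ENNReal.ofReal (Real.exp (-μ * t)) *
              ENNReal.ofReal ((t - s) ^ (β - 1))) * ENNReal.ofReal (g s) := by
          rw [← lintegral_mul_const' _ _ ENNReal.ofReal_ne_top]
          refine setLIntegral_congr_fun measurableSet_Ioi
            (fun t ht => ?_)
          rw [ENNReal.ofReal_mul (Real.rpow_nonneg (by simp only [Set.mem_Ioi] at ht; linarith) _),
            mul_assoc]
      _ = ENNReal.ofReal (Real.exp (-μ * s)) * ENNReal.ofReal c * ENNReal.ofReal (g s) := by
          rw [hshift s]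
      _ = ENNReal.ofReal c * ENNReal.ofReal (Real.exp (-μ * s) * g s) := by
          rw [ENNReal.ofReal_mul (Real.exp_nonneg _)]
          ring
  -- Tonelli: swap the order of integration
  set A : ENNReal := ∫⁻ t in Set.Ioc (0:ℝ) T, ENNReal.ofReal (Real.exp (-μ * t)) * J t
    with hA
  have hA_eq : A = ∫⁻ s, ∫⁻ t in Set.Ioc (0:ℝ) T,
      ENNReal.ofReal (Real.exp (-μ * t)) * K (t, s) := by
    rw [hA]
    have h1 : ∀ t, ENNReal.ofReal (Real.exp (-μ * t)) * J t
        = ∫⁻ s, ENNReal.ofReal (Real.exp (-μ * t)) * K (t, s) := fun t =>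
      (lintegral_const_mul' _ _ ENNReal.ofReal_ne_top).symm
    simp_rw [h1]
    refine lintegral_lintegral_swap ?_
    exact (((measurable_const.mul measurable_fst).exp.ennreal_ofReal).mul
      hK_meas).aemeasurable
  have hvanish : ∀ s, s ∉ Set.Ioc (0:ℝ) T →
      (∫⁻ t in Set.Ioc (0:ℝ) T, ENNReal.ofReal (Real.exp (-μ * t)) * K (t, s)) = 0 := by
    intro s hs
    have h0 : ∀ᵐ t ∂(volume.restrict (Set.Ioc (0:ℝ) T)),
        ENNReal.ofReal (Real.exp (-μ * t)) * K (t, s) = 0 := by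
      rw [ae_restrict_iff' measurableSet_Ioc]
      refine Eventually.of_forall fun t ht => ?_
      rw [hK_zero t s (fun hmem => hs ⟨hmem.1, hmem.2.trans ht.2⟩), mul_zero]
    rw [lintegral_congr_ae h0, lintegral_zero]
  have hA2 : A = ∫⁻ s in Set.Ioc (0:ℝ) T, ∫⁻ t in Set.Ioc (0:ℝ) T,
      ENNReal.ofReal (Real.exp (-μ * t)) * K (t, s) := by
    rw [hA_eq, ← lintegral_indicator measurableSet_Ioc]
    refine lintegral_congr fun s => ?_
    by_cases hs : s ∈ Set.Ioc (0:ℝ) T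
    · rw [Set.indicator_of_mem hs]
    · rw [Set.indicator_of_notMem hs, hvanish s hs]
  have hA_le : A ≤ ENNReal.ofReal c * ENNReal.ofReal R := by
    rw [hA2]
    calc ∫⁻ s in Set.Ioc (0:ℝ) T, ∫⁻ t in Set.Ioc (0:ℝ) T,
          ENNReal.ofReal (Real.exp (-μ * t)) * K (t, s)
        ≤ ∫⁻ s in Set.Ioc (0:ℝ) T,
            ENNReal.ofReal c * ENNReal.ofReal (Real.exp (-μ * s) * g s) :=
          lintegral_mono_ae ((ae_restrict_iff' measurableSet_Ioc).mpr
            (Eventually.of_forall hsb))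
      _ = ENNReal.ofReal c * ENNReal.ofReal R := by
          rw [lintegral_const_mul' _ _ ENNReal.ofReal_ne_top, hL]
  -- final computation
  have hfinal : ∫ t in Set.Ioc (0:ℝ) T, Ψ t ≤ 1 / Real.Gamma β * (c * R) := by
    rw [integral_eq_lintegral_of_nonneg_ae
      ((ae_restrict_iff' measurableSet_Ioc).mpr (Eventually.of_forall fun t _ => hΨ_nonneg t))
      hΨ_meas.aestronglyMeasurable]
    have hb : (∫⁻ t in Set.Ioc (0:ℝ) T, ENNReal.ofReal (Ψ t))
        ≤ ENNReal.ofReal (1 / Real.Gamma β) * (ENNReal.ofReal c * ENNReal.ofReal R) := by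
      calc ∫⁻ t in Set.Ioc (0:ℝ) T, ENNReal.ofReal (Ψ t)
          ≤ ∫⁻ t in Set.Ioc (0:ℝ) T, ENNReal.ofReal (1 / Real.Gamma β) *
              (ENNReal.ofReal (Real.exp (-μ * t)) * J t) := by
            refine lintegral_mono fun t => ?_
            simp only [hΨ]
            rw [ENNReal.ofReal_mul (Real.exp_nonneg _),
              ENNReal.ofReal_mul (by positivity : (0:ℝ) ≤ 1 / Real.Gamma β)]
            calc ENNReal.ofReal (Real.exp (-μ * t)) *
                  (ENNReal.ofReal (1 / Real.Gamma β) * ENNReal.ofReal (J t).toReal)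
                ≤ ENNReal.ofReal (Real.exp (-μ * t)) *
                  (ENNReal.ofReal (1 / Real.Gamma β) * J t) := by
                  gcongr
                  exact ENNReal.ofReal_toReal_le
              _ = ENNReal.ofReal (1 / Real.Gamma β) *
                  (ENNReal.ofReal (Real.exp (-μ * t)) * J t) := by ring
        _ = ENNReal.ofReal (1 / Real.Gamma β) * A := by
            rw [lintegral_const_mul' _ _ ENNReal.ofReal_ne_top, hA]
        _ ≤ ENNReal.ofReal (1 / Real.Gamma β) * (ENNReal.ofReal c * ENNReal.ofReal R) := by
            gcongr
    have h5 := ENNReal.toReal_mono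
      (ENNReal.mul_ne_top ENNReal.ofReal_ne_top
        (ENNReal.mul_ne_top ENNReal.ofReal_ne_top ENNReal.ofReal_ne_top)) hb
    refine h5.trans (le_of_eq ?_)
    rw [ENNReal.toReal_mul, ENNReal.toReal_mul, ENNReal.toReal_ofReal (by positivity),
      ENNReal.toReal_ofReal hc_nonneg, ENNReal.toReal_ofReal hR_nonneg]
  refine hfinal.trans (le_of_eq ?_)
  have hpow : (1 / μ) ^ β = μ ^ (-β) := by
    rw [one_div, Real.inv_rpow hμ.le, ← Real.rpow_neg hμ.le]
  rw [hc, hpow]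
  field_simp
end

section
/- Let n ∈ ℕ, β > 0, μ > 0, T > 0, P⁰ ∈ ℝⁿ, and let E : ℝⁿ → ℝⁿ satisfy ‖E(x) − E(y)‖₁ ≤ L ‖x − y‖₁ for all x, y ∈ ℝⁿ, where ‖·‖₁ is the ℓ¹ norm on ℝⁿ. Define the operator Λ on continuous functions P : [0,T] → ℝⁿ by (ΛP)(t) = P⁰ + (1/Γ(β)) ∫₀ᵗ (t−s)^{β−1} E(P(s)) ds. Then for all continuous P, Q : [0,T] → ℝⁿ, ∫₀ᵀ e^{−μt} ‖(ΛP)(t) − (ΛQ)(t)‖₁ dt ≤ (L/μ^β) ∫₀ᵀ e^{−μt} ‖P(t) − Q(t)‖₁ dt. In particular, if L < μ^β then Λ is a contraction with respect to the weighted norm ‖z‖_T = ∫₀ᵀ e^{−μt} ‖z(t)‖₁ dt. -/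
open MeasureTheory Set
open scoped ENNReal


lemma swap_triangle (T : ℝ) (f : ℝ → ℝ → ℝ≥0∞) (hf : Measurable (Function.uncurry f)) :
    ∫⁻ t in Ioo 0 T, ∫⁻ s in Ioo 0 t, f t s = ∫⁻ s in Ioo 0 T, ∫⁻ t in Ioo s T, f t s := by
  set S : Set (ℝ × ℝ) := {p | 0 < p.2 ∧ p.2 < p.1 ∧ p.1 < T} with hSdef
  have hS : MeasurableSet S := by
    apply MeasurableSet.inter
    · exact measurableSet_lt measurable_const measurable_snd
    apply MeasurableSet.inter
    · exact measurableSet_lt measurable_snd measurable_fst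
    · exact measurableSet_lt measurable_fst measurable_const
  set H : ℝ × ℝ → ℝ≥0∞ := S.indicator (Function.uncurry f) with hHdef
  have hHm : Measurable H := hf.indicator hS
  have h1 : ∫⁻ t in Ioo 0 T, ∫⁻ s in Ioo 0 t, f t s = ∫⁻ t, ∫⁻ s, H (t, s) := by
    rw [← lintegral_indicator measurableSet_Ioo]
    congr 1
    funext t
    by_cases ht : t ∈ Ioo 0 T
    · rw [indicator_of_mem ht, ← lintegral_indicator measurableSet_Ioo]
      congr 1; funext s
      by_cases hs : s ∈ Ioo 0 t
      · rw [indicator_of_mem hs, hHdef,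
          indicator_of_mem (show (t, s) ∈ S from ⟨hs.1, hs.2, ht.2⟩)]
        rfl
      · rw [indicator_of_notMem hs, hHdef, indicator_of_notMem]
        intro hmem
        exact hs ⟨hmem.1, hmem.2.1⟩
    · rw [indicator_of_notMem ht]
      symm
      simp only [hHdef]
      rw [← lintegral_zero]
      congr 1; funext s
      apply indicator_of_notMem
      intro hmem
      rcases not_and_or.mp (fun h => ht ⟨h.1, h.2⟩) with h | h
      · rcases hmem with ⟨h1', h2', h3'⟩
        exact ht ⟨h1'.trans h2', h3'⟩
      · exact h (hmem.2.2)
  have h2 : ∫⁻ s in Ioo 0 T, ∫⁻ t in Ioo s T, f t s = ∫⁻ s, ∫⁻ t, H (t, s) := by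
    rw [← lintegral_indicator measurableSet_Ioo]
    congr 1
    funext s
    by_cases hs : s ∈ Ioo 0 T
    · rw [indicator_of_mem hs, ← lintegral_indicator measurableSet_Ioo]
      congr 1; funext t
      by_cases ht : t ∈ Ioo s T
      · rw [indicator_of_mem ht, hHdef,
          indicator_of_mem (show (t, s) ∈ S from ⟨hs.1, ht.1, ht.2⟩)]
        rfl
      · rw [indicator_of_notMem ht, hHdef, indicator_of_notMem]
        intro hmem
        exact ht ⟨hmem.2.1, hmem.2.2⟩
    · rw [indicator_of_notMem hs]
      symm
      rw [← lintegral_zero]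
      congr 1; funext t
      apply indicator_of_notMem
      intro hmem
      exact hs ⟨hmem.1, hmem.2.1.trans hmem.2.2⟩
  rw [h1, h2]
  have := MeasureTheory.lintegral_lintegral_swap (μ := (volume : Measure ℝ))
    (ν := (volume : Measure ℝ)) (f := fun t s => H (t, s)) ?_
  · exact this
  · have : Function.uncurry (fun t s => H (t, s)) = H := rfl
    rw [this]
    exact hHm.aemeasurable


lemma lintegral_gamma_aux {β μ : ℝ} (hβ : 0 < β) (hμ : 0 < μ) :
    ∫⁻ u in Ioi (0:ℝ), ENNReal.ofReal (u ^ (β - 1) * Real.exp (-(μ * u)))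
      = ENNReal.ofReal ((1 / μ) ^ β * Real.Gamma β) := by
  have hb : ∫ u in Ioi (0:ℝ), u ^ (β - 1) * Real.exp (-(μ * u))
      = (1 / μ) ^ β * Real.Gamma β := Real.integral_rpow_mul_exp_neg_mul_Ioi hβ hμ
  have hm : AEStronglyMeasurable (fun u : ℝ => u ^ (β - 1) * Real.exp (-(μ * u)))
      (volume.restrict (Ioi (0:ℝ))) := by
    apply Measurable.aestronglyMeasurable
    exact (measurable_id.pow_const _).mul ((measurable_id.const_mul μ).neg.exp)
  have hnn : 0 ≤ᵐ[volume.restrict (Ioi (0:ℝ))]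
      fun u : ℝ => u ^ (β - 1) * Real.exp (-(μ * u)) := by
    rw [Filter.EventuallyLE, ae_restrict_iff' measurableSet_Ioi]
    exact ae_of_all _ fun u (hu : 0 < u) => by positivity
  have h1 := integral_eq_lintegral_of_nonneg_ae hnn hm
  rw [hb] at h1
  have hpos : 0 < (1 / μ) ^ β * Real.Gamma β := by positivity
  have hne : (∫⁻ u in Ioi (0:ℝ), ENNReal.ofReal (u ^ (β - 1) * Real.exp (-(μ * u)))) ≠ ⊤ := by
    intro h
    rw [h, ENNReal.toReal_top] at h1
    exact absurd h1 hpos.ne'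
  rw [← ENNReal.ofReal_toReal hne, ← h1]


lemma lintegral_translate_aux (s : ℝ) (h : ℝ → ℝ≥0∞) (hm : Measurable h) :
    ∫⁻ t in Ioi s, h (t - s) = ∫⁻ u in Ioi (0:ℝ), h u := by
  have hmap : Measure.map (fun u : ℝ => u + s) volume = volume :=
    map_add_right_eq_self volume s
  have := MeasureTheory.setLIntegral_map (μ := (volume : Measure ℝ)) (s := Ioi s) (f := fun t => h (t - s))
    (g := fun u : ℝ => u + s) measurableSet_Ioi
    (hm.comp (measurable_id.sub_const s)) (measurable_add_const s)
  rw [hmap] at this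
  rw [this]
  have hpre : (fun u : ℝ => u + s) ⁻¹' Ioi s = Ioi 0 := by
    ext u; simp [lt_add_iff_pos_left]
  rw [hpre]
  simp
/-- **Contraction estimate for the fractional-integral operator `Λ`.**
With `(ΛP)(t) = P⁰ + (1/Γ(β)) ∫₀ᵗ (t−s)^{β−1} E(P(s)) ds` and `E` Lipschitz
with constant `L` w.r.t. the `ℓ¹` norm, one has for continuous `P, Q`:
`∫₀ᵀ e^{−μt} ‖(ΛP)(t) − (ΛQ)(t)‖₁ dt ≤ (L/μ^β) ∫₀ᵀ e^{−μt} ‖P(t) − Q(t)‖₁ dt`;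
in particular `Λ` is a contraction in the weighted norm whenever `L < μ^β`. -/
theorem stmt_7 (n : ℕ) (β μ T L : ℝ) (hβ : 0 < β) (hμ : 0 < μ) (hT : 0 < T)
    (P0 : Fin n → ℝ) (E : (Fin n → ℝ) → Fin n → ℝ)
    (hLip : ∀ x y : Fin n → ℝ, (∑ i, |E x i - E y i|) ≤ L * ∑ i, |x i - y i|)
    (Λ : (ℝ → Fin n → ℝ) → ℝ → Fin n → ℝ)
    (hΛ : ∀ (P : ℝ → Fin n → ℝ) (t : ℝ) (i : Fin n),
      Λ P t i = P0 i + (1 / Real.Gamma β) *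
        ∫ s in (0:ℝ)..t, (t - s) ^ (β - 1) * E (P s) i)
    (P Q : ℝ → Fin n → ℝ)
    (hP : ContinuousOn P (Set.Icc (0:ℝ) T))
    (hQ : ContinuousOn Q (Set.Icc (0:ℝ) T)) :
    ((∫ t in (0:ℝ)..T, Real.exp (-μ * t) * ∑ i, |Λ P t i - Λ Q t i|)
        ≤ (L / μ ^ β) *
          ∫ t in (0:ℝ)..T, Real.exp (-μ * t) * ∑ i, |P t i - Q t i|) ∧
      (L < μ ^ β → L / μ ^ β < 1) := by
  have hμβ : (0:ℝ) < μ ^ β := Real.rpow_pos_of_pos hμ β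
  have hΓ : (0:ℝ) < Real.Gamma β := Real.Gamma_pos_of_pos hβ
  refine ⟨?_, fun h => by rw [div_lt_one hμβ]; exact h⟩
  rcases Nat.eq_zero_or_pos n with hn | hn
  · subst hn
    simp
  -- L is nonnegative
  have hL : 0 ≤ L := by
    have h0 := hLip (fun _ => 0) (fun _ => 1)
    simp only [zero_sub, abs_neg, abs_one, Finset.sum_const, Finset.card_univ,
      Fintype.card_fin, nsmul_eq_mul, mul_one] at h0
    have h1 : (0:ℝ) ≤ L * n :=
      le_trans (Finset.sum_nonneg fun i _ => abs_nonneg _) h0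
    have h2 : (0:ℝ) < n := by exact_mod_cast hn
    nlinarith
  -- each coordinate of E is continuous
  have hEc : ∀ i : Fin n, Continuous fun x : Fin n → ℝ => E x i := by
    intro i
    refine (LipschitzWith.of_dist_le_mul (K := (L * n).toNNReal) fun x y => ?_).continuous
    rw [Real.coe_toNNReal _ (by positivity), Real.dist_eq]
    calc |E x i - E y i| ≤ ∑ j, |E x j - E y j| :=
          Finset.single_le_sum (f := fun j => |E x j - E y j|) (fun j _ => abs_nonneg _)
            (Finset.mem_univ i)
      _ ≤ L * ∑ j, |x j - y j| := hLip x y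
      _ ≤ L * (n * dist x y) := by
          apply mul_le_mul_of_nonneg_left _ hL
          calc (∑ j, |x j - y j|) ≤ ∑ _j : Fin n, dist x y :=
                Finset.sum_le_sum fun j _ => by
                  rw [← Real.dist_eq]; exact dist_le_pi_dist x y j
            _ = n * dist x y := by
                simp [Finset.sum_const, Finset.card_univ, nsmul_eq_mul]
      _ = L * n * dist x y := by ring
  -- clamping to [0, T]
  set cl : ℝ → ℝ := fun s => min (max s 0) T with hcl_def
  have hcl_cont : Continuous cl := (continuous_id.max continuous_const).min continuous_const
  have hcl_mem : ∀ s, cl s ∈ Icc (0:ℝ) T :=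
    fun s => ⟨le_min (le_max_right s 0) hT.le, min_le_right _ _⟩
  have hcl_eq : ∀ s ∈ Icc (0:ℝ) T, cl s = s := by
    intro s hs
    simp only [hcl_def]
    rw [max_eq_left hs.1, min_eq_left hs.2]
  set D : ℝ → ℝ := fun s => ∑ i, |P (cl s) i - Q (cl s) i| with hD_def
  have hDc : Continuous D := by
    apply continuous_finset_sum
    intro i _
    exact (((continuous_apply i).comp (hP.comp_continuous hcl_cont hcl_mem)).sub
      ((continuous_apply i).comp (hQ.comp_continuous hcl_cont hcl_mem))).abs
  have hD0 : ∀ s, 0 ≤ D s := fun s => Finset.sum_nonneg fun i _ => abs_nonneg _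
  have hDeq : ∀ s ∈ Icc (0:ℝ) T, D s = ∑ i, |P s i - Q s i| := by
    intro s hs
    simp only [hD_def, hcl_eq s hs]
  -- kernel integrability
  have hKint : ∀ t : ℝ, IntervalIntegrable (fun s => (t - s) ^ (β - 1)) volume 0 t := by
    intro t
    have h1 : IntervalIntegrable (fun x : ℝ => x ^ (β - 1)) volume 0 t :=
      intervalIntegral.intervalIntegrable_rpow' (by linarith)
    have h2 := (h1.comp_sub_left t).symm
    simpa using h2
  -- Step A : pointwise bound for the sum of absolute differences
  have stepA : ∀ t ∈ Icc (0:ℝ) T, (∑ i, |Λ P t i - Λ Q t i|) ≤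
      (L / Real.Gamma β) * ∫ s in (0:ℝ)..t, (t - s) ^ (β - 1) * D s := by
    intro t ht
    have ht0 : (0:ℝ) ≤ t := ht.1
    have huIcc : uIcc (0:ℝ) t = Icc (0:ℝ) t := uIcc_of_le ht0
    have hsub : Icc (0:ℝ) t ⊆ Icc (0:ℝ) T := Icc_subset_Icc le_rfl ht.2
    have hKnn : ∀ s ∈ Icc (0:ℝ) t, 0 ≤ (t - s) ^ (β - 1) :=
      fun s hs => Real.rpow_nonneg (by linarith [hs.2]) _
    have hcontP : ∀ i, ContinuousOn (fun s => E (P s) i) (Icc (0:ℝ) t) :=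
      fun i => (hEc i).comp_continuousOn (hP.mono hsub)
    have hcontQ : ∀ i, ContinuousOn (fun s => E (Q s) i) (Icc (0:ℝ) t) :=
      fun i => (hEc i).comp_continuousOn (hQ.mono hsub)
    have hIP : ∀ i, IntervalIntegrable (fun s => (t - s) ^ (β - 1) * E (P s) i) volume 0 t :=
      fun i => (hKint t).mul_continuousOn (huIcc ▸ hcontP i)
    have hIQ : ∀ i, IntervalIntegrable (fun s => (t - s) ^ (β - 1) * E (Q s) i) volume 0 t :=
      fun i => (hKint t).mul_continuousOn (huIcc ▸ hcontQ i)
    have hIabs : ∀ i, IntervalIntegrable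
        (fun s => (t - s) ^ (β - 1) * |E (P s) i - E (Q s) i|) volume 0 t :=
      fun i => (hKint t).mul_continuousOn (huIcc ▸ ((hcontP i).sub (hcontQ i)).abs)
    have hdiff : ∀ i, Λ P t i - Λ Q t i = (1 / Real.Gamma β) *
        ∫ s in (0:ℝ)..t, (t - s) ^ (β - 1) * (E (P s) i - E (Q s) i) := by
      intro i
      have h2 : ∫ s in (0:ℝ)..t, (t - s) ^ (β - 1) * (E (P s) i - E (Q s) i)
          = (∫ s in (0:ℝ)..t, (t - s) ^ (β - 1) * E (P s) i)
            - ∫ s in (0:ℝ)..t, (t - s) ^ (β - 1) * E (Q s) i := by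
        simp only [mul_sub]
        exact intervalIntegral.integral_sub (hIP i) (hIQ i)
      rw [hΛ P t i, hΛ Q t i, h2]
      ring
    calc (∑ i, |Λ P t i - Λ Q t i|)
        = ∑ i, (1 / Real.Gamma β) *
            |∫ s in (0:ℝ)..t, (t - s) ^ (β - 1) * (E (P s) i - E (Q s) i)| := by
          refine Finset.sum_congr rfl fun i _ => ?_
          rw [hdiff i, abs_mul, abs_of_nonneg (by positivity : (0:ℝ) ≤ 1 / Real.Gamma β)]
      _ ≤ ∑ i, (1 / Real.Gamma β) *
            ∫ s in (0:ℝ)..t, (t - s) ^ (β - 1) * |E (P s) i - E (Q s) i| := by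
          refine Finset.sum_le_sum fun i _ => ?_
          refine mul_le_mul_of_nonneg_left ?_ (by positivity)
          refine le_trans (intervalIntegral.abs_integral_le_integral_abs ht0) (le_of_eq ?_)
          apply intervalIntegral.integral_congr
          intro s hs
          rw [huIcc] at hs
          simp only [abs_mul, abs_of_nonneg (hKnn s hs)]
      _ = (1 / Real.Gamma β) * ∫ s in (0:ℝ)..t,
            (t - s) ^ (β - 1) * (∑ i, |E (P s) i - E (Q s) i|) := by
          rw [← Finset.mul_sum]
          congr 1
          rw [← intervalIntegral.integral_finset_sum (fun i _ => hIabs i)]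
          apply intervalIntegral.integral_congr
          intro s _
          simp only [Finset.mul_sum]
      _ ≤ (1 / Real.Gamma β) * ∫ s in (0:ℝ)..t, (t - s) ^ (β - 1) * (L * D s) := by
          refine mul_le_mul_of_nonneg_left ?_ (by positivity)
          refine intervalIntegral.integral_mono_on ht0 ?_ ?_ ?_
          · exact (hKint t).mul_continuousOn (huIcc ▸ (continuousOn_finset_sum _
              fun i _ => ((hcontP i).sub (hcontQ i)).abs))
          · exact (hKint t).mul_continuousOn (huIcc ▸
              (continuous_const.mul hDc).continuousOn)
          · intro s hs
            refine mul_le_mul_of_nonneg_left ?_ (hKnn s hs)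
            rw [hDeq s (hsub hs)]
            exact hLip (P s) (Q s)
      _ = (L / Real.Gamma β) * ∫ s in (0:ℝ)..t, (t - s) ^ (β - 1) * D s := by
          rw [show (fun s => (t - s) ^ (β - 1) * (L * D s))
              = fun s => L * ((t - s) ^ (β - 1) * D s) from funext fun s => by ring,
            intervalIntegral.integral_const_mul]
          ring
  -- rewrite RHS using D
  have hRHS_eq : (∫ t in (0:ℝ)..T, Real.exp (-μ * t) * ∑ i, |P t i - Q t i|)
      = ∫ t in (0:ℝ)..T, Real.exp (-μ * t) * D t := by
    apply intervalIntegral.integral_congr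
    intro t ht
    rw [uIcc_of_le hT.le] at ht
    show Real.exp (-μ * t) * (∑ i, |P t i - Q t i|) = Real.exp (-μ * t) * D t
    rw [hDeq t ht]
  rw [hRHS_eq]
  have hJ0 : 0 ≤ ∫ t in (0:ℝ)..T, Real.exp (-μ * t) * D t :=
    intervalIntegral.integral_nonneg hT.le fun u _ => mul_nonneg (Real.exp_nonneg _) (hD0 u)
  by_cases hint : IntervalIntegrable
      (fun t => Real.exp (-μ * t) * ∑ i, |Λ P t i - Λ Q t i|) volume 0 T
  swap
  · rw [intervalIntegral.integral_undef hint]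
    exact mul_nonneg (div_nonneg hL hμβ.le) hJ0
  set C := L / Real.Gamma β with hC_def
  have hC : 0 ≤ C := div_nonneg hL hΓ.le
  have hLμ : 0 ≤ L / μ ^ β := div_nonneg hL hμβ.le
  set f : ℝ → ℝ → ℝ≥0∞ := fun t s =>
    ENNReal.ofReal (Real.exp (-μ * t) * (t - s) ^ (β - 1)) * ENNReal.ofReal (C * D s)
    with hf_def
  have hfmeas : Measurable (Function.uncurry f) := by
    refine Measurable.mul
      (f := fun p : ℝ × ℝ => ENNReal.ofReal (Real.exp (-μ * p.1) * (p.1 - p.2) ^ (β - 1)))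
      (g := fun p : ℝ × ℝ => ENNReal.ofReal (C * D p.2)) ?_ ?_
    · apply ENNReal.measurable_ofReal.comp
      exact ((measurable_fst.const_mul (-μ)).exp.mul
        ((measurable_fst.sub measurable_snd).pow_const (β - 1)))
    · exact ENNReal.measurable_ofReal.comp
        ((hDc.measurable.comp measurable_snd).const_mul C)
  have hFm : AEStronglyMeasurable (fun t => Real.exp (-μ * t) * ∑ i, |Λ P t i - Λ Q t i|)
      (volume.restrict (Ioo (0:ℝ) T)) := by
    exact hint.1.aestronglyMeasurable.mono_measure
      (Measure.restrict_mono Ioo_subset_Ioc_self le_rfl)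
  have hF0 : ∀ t, 0 ≤ Real.exp (-μ * t) * ∑ i, |Λ P t i - Λ Q t i| :=
    fun t => mul_nonneg (Real.exp_nonneg _) (Finset.sum_nonneg fun i _ => abs_nonneg _)
  have step1 : (∫ t in (0:ℝ)..T, Real.exp (-μ * t) * ∑ i, |Λ P t i - Λ Q t i|)
      = (∫⁻ t in Ioo (0:ℝ) T,
          ENNReal.ofReal (Real.exp (-μ * t) * ∑ i, |Λ P t i - Λ Q t i|)).toReal := by
    rw [intervalIntegral.integral_of_le hT.le,
      ← Measure.restrict_congr_set Ioo_ae_eq_Ioc]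
    exact integral_eq_lintegral_of_nonneg_ae (ae_of_all _ hF0) hFm
  -- pointwise bound in ℝ≥0∞
  have hpt : ∀ t ∈ Ioo (0:ℝ) T,
      ENNReal.ofReal (Real.exp (-μ * t) * ∑ i, |Λ P t i - Λ Q t i|)
        ≤ ∫⁻ s in Ioo (0:ℝ) t, f t s := by
    intro t ht
    have ht0 : (0:ℝ) ≤ t := ht.1.le
    have hB : IntervalIntegrable (fun s => (t - s) ^ (β - 1) * D s) volume 0 t :=
      (hKint t).mul_continuousOn hDc.continuousOn
    have h1 : Real.exp (-μ * t) * ∑ i, |Λ P t i - Λ Q t i|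
        ≤ Real.exp (-μ * t) * (C * ∫ s in (0:ℝ)..t, (t - s) ^ (β - 1) * D s) :=
      mul_le_mul_of_nonneg_left (stepA t ⟨ht0, ht.2.le⟩) (Real.exp_nonneg _)
    refine le_trans (ENNReal.ofReal_le_ofReal h1) (le_of_eq ?_)
    have hBint : Integrable (fun s => (t - s) ^ (β - 1) * D s)
        (volume.restrict (Ioo (0:ℝ) t)) := by
      exact hB.1.mono_set Ioo_subset_Ioc_self
    have hBnn : 0 ≤ᵐ[volume.restrict (Ioo (0:ℝ) t)]
        fun s => (t - s) ^ (β - 1) * D s := by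
      rw [Filter.EventuallyLE, ae_restrict_iff' measurableSet_Ioo]
      exact ae_of_all _ fun s hs =>
        mul_nonneg (Real.rpow_nonneg (by linarith [hs.2]) _) (hD0 s)
    rw [intervalIntegral.integral_of_le ht0, ← Measure.restrict_congr_set Ioo_ae_eq_Ioc,
      ENNReal.ofReal_mul (Real.exp_nonneg _), ENNReal.ofReal_mul hC,
      ofReal_integral_eq_lintegral_ofReal hBint hBnn,
      ← lintegral_const_mul' _ _ ENNReal.ofReal_ne_top,
      ← lintegral_const_mul' _ _ ENNReal.ofReal_ne_top]
    refine setLIntegral_congr_fun measurableSet_Ioo (fun s hs => ?_)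
    have hK0 : (0:ℝ) ≤ (t - s) ^ (β - 1) := Real.rpow_nonneg (by linarith [hs.2]) _
    simp only [hf_def]
    rw [← ENNReal.ofReal_mul hC, ← ENNReal.ofReal_mul (Real.exp_nonneg _),
      ← ENNReal.ofReal_mul (mul_nonneg (Real.exp_nonneg _) hK0)]
    congr 1
    ring
  -- inner kernel-integral bound
  have hker : ∀ s ∈ Ioo (0:ℝ) T,
      (∫⁻ t in Ioo s T, f t s)
        ≤ ENNReal.ofReal ((L / μ ^ β) * (Real.exp (-μ * s) * D s)) := by
    intro s _
    have hmh : Measurable fun u : ℝ => ENNReal.ofReal (u ^ (β - 1) * Real.exp (-(μ * u))) :=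
      ENNReal.measurable_ofReal.comp
        ((measurable_id.pow_const _).mul ((measurable_id.const_mul μ).neg.exp))
    have heq : ∀ t : ℝ, ENNReal.ofReal (Real.exp (-μ * t) * (t - s) ^ (β - 1))
        = ENNReal.ofReal (Real.exp (-μ * s))
          * ENNReal.ofReal ((t - s) ^ (β - 1) * Real.exp (-(μ * (t - s)))) := by
      intro t
      rw [← ENNReal.ofReal_mul (Real.exp_nonneg _)]
      congr 1
      have h2 : Real.exp (-μ * t) = Real.exp (-μ * s) * Real.exp (-(μ * (t - s))) := by
        rw [← Real.exp_add]; congr 1; ring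
      rw [h2]; ring
    simp only [hf_def]
    rw [lintegral_mul_const' _ _ ENNReal.ofReal_ne_top]
    have hkle : (∫⁻ t in Ioo s T, ENNReal.ofReal (Real.exp (-μ * t) * (t - s) ^ (β - 1)))
        ≤ ENNReal.ofReal (Real.exp (-μ * s))
          * ENNReal.ofReal ((1 / μ) ^ β * Real.Gamma β) := by
      calc (∫⁻ t in Ioo s T, ENNReal.ofReal (Real.exp (-μ * t) * (t - s) ^ (β - 1)))
          = ∫⁻ t in Ioo s T, ENNReal.ofReal (Real.exp (-μ * s))
              * ENNReal.ofReal ((t - s) ^ (β - 1) * Real.exp (-(μ * (t - s)))) :=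
            lintegral_congr fun t => heq t
        _ = ENNReal.ofReal (Real.exp (-μ * s)) * ∫⁻ t in Ioo s T,
              ENNReal.ofReal ((t - s) ^ (β - 1) * Real.exp (-(μ * (t - s)))) :=
            lintegral_const_mul' _ _ ENNReal.ofReal_ne_top
        _ ≤ ENNReal.ofReal (Real.exp (-μ * s)) * ∫⁻ t in Ioi s,
              ENNReal.ofReal ((t - s) ^ (β - 1) * Real.exp (-(μ * (t - s)))) :=
            mul_le_mul_right (lintegral_mono_set Ioo_subset_Ioi_self) _
        _ = ENNReal.ofReal (Real.exp (-μ * s)) * ∫⁻ u in Ioi (0:ℝ),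
              ENNReal.ofReal (u ^ (β - 1) * Real.exp (-(μ * u))) := by
            rw [lintegral_translate_aux s _ hmh]
        _ = ENNReal.ofReal (Real.exp (-μ * s))
              * ENNReal.ofReal ((1 / μ) ^ β * Real.Gamma β) := by
            rw [lintegral_gamma_aux hβ hμ]
    refine le_trans (mul_le_mul_left hkle _) (le_of_eq ?_)
    have h1μpos : (0:ℝ) < (1 / μ) ^ β := Real.rpow_pos_of_pos (by positivity) β
    rw [← ENNReal.ofReal_mul (Real.exp_nonneg _),
      ← ENNReal.ofReal_mul (mul_nonneg (Real.exp_nonneg _) (by positivity))]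
    congr 1
    have h1μ : (1 / μ) ^ β = (μ ^ β)⁻¹ := by
      rw [one_div, Real.inv_rpow hμ.le]
    rw [h1μ, hC_def]
    field_simp
  -- the integrable RHS density
  have hDint : Integrable (fun s => Real.exp (-μ * s) * D s)
      (volume.restrict (Ioo (0:ℝ) T)) := by
    have hc : Continuous fun s : ℝ => Real.exp (-μ * s) * D s :=
      (Real.continuous_exp.comp (continuous_const.mul continuous_id)).mul hDc
    exact (hc.intervalIntegrable 0 T).1.mono_set Ioo_subset_Ioc_self
  have key2 : (∫⁻ t in Ioo (0:ℝ) T,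
      ENNReal.ofReal (Real.exp (-μ * t) * ∑ i, |Λ P t i - Λ Q t i|))
      ≤ ENNReal.ofReal ((L / μ ^ β) * ∫ t in (0:ℝ)..T, Real.exp (-μ * t) * D t) := by
    calc (∫⁻ t in Ioo (0:ℝ) T,
        ENNReal.ofReal (Real.exp (-μ * t) * ∑ i, |Λ P t i - Λ Q t i|))
        ≤ ∫⁻ t in Ioo (0:ℝ) T, ∫⁻ s in Ioo (0:ℝ) t, f t s := by
          apply lintegral_mono_ae
          rw [ae_restrict_iff' measurableSet_Ioo]
          exact ae_of_all _ hpt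
      _ = ∫⁻ s in Ioo (0:ℝ) T, ∫⁻ t in Ioo s T, f t s := swap_triangle T f hfmeas
      _ ≤ ∫⁻ s in Ioo (0:ℝ) T,
            ENNReal.ofReal ((L / μ ^ β) * (Real.exp (-μ * s) * D s)) := by
          apply lintegral_mono_ae
          rw [ae_restrict_iff' measurableSet_Ioo]
          exact ae_of_all _ hker
      _ = ENNReal.ofReal (L / μ ^ β) * ∫⁻ s in Ioo (0:ℝ) T,
            ENNReal.ofReal (Real.exp (-μ * s) * D s) := by
          rw [← lintegral_const_mul' _ _ ENNReal.ofReal_ne_top]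
          exact lintegral_congr fun s => ENNReal.ofReal_mul hLμ
      _ = ENNReal.ofReal (L / μ ^ β)
            * ENNReal.ofReal (∫ s in Ioo (0:ℝ) T, Real.exp (-μ * s) * D s) := by
          rw [ofReal_integral_eq_lintegral_ofReal hDint
            (ae_of_all _ fun s => mul_nonneg (Real.exp_nonneg _) (hD0 s))]
      _ = ENNReal.ofReal ((L / μ ^ β) * ∫ t in (0:ℝ)..T, Real.exp (-μ * t) * D t) := by
          rw [← ENNReal.ofReal_mul hLμ]
          congr 2
          rw [intervalIntegral.integral_of_le hT.le,
            ← Measure.restrict_congr_set Ioo_ae_eq_Ioc]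
  rw [step1]
  have hfin := ENNReal.toReal_mono ENNReal.ofReal_ne_top key2
  rwa [ENNReal.toReal_ofReal (mul_nonneg hLμ hJ0)] at hfin
end

section
/- Let n ∈ ℕ, β > 0, T > 0, P⁰ ∈ ℝⁿ, and let E : ℝⁿ → ℝⁿ be Lipschitz continuous. If P, Q : [0,T] → ℝⁿ are continuous functions such that P(t) = P⁰ + (1/Γ(β)) ∫₀ᵗ (t−s)^{β−1} E(P(s)) ds and Q(t) = P⁰ + (1/Γ(β)) ∫₀ᵗ (t−s)^{β−1} E(Q(s)) ds for all t ∈ [0,T], then P = Q on [0,T]. -/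
open MeasureTheory Set intervalIntegral

lemma frac_integrable {β t : ℝ} (hβ : 0 < β) (ht : 0 ≤ t) {f : ℝ → ℝ}
    (hf : ContinuousOn f (Set.Icc 0 t)) :
    IntervalIntegrable (fun s => (t - s) ^ (β - 1) * f s) volume 0 t := by
  have h1 : IntervalIntegrable (fun x : ℝ => x ^ (β - 1)) volume 0 t :=
    intervalIntegral.intervalIntegrable_rpow' (by linarith)
  have h2 := h1.comp_sub_left t
  simp only [sub_zero, sub_self] at h2
  exact (h2.symm).mul_continuousOn (by rwa [Set.uIcc_of_le ht])

lemma ext_step {n : ℕ} {β T : ℝ} (hβ : 0 < β)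
    {E : (Fin n → ℝ) → Fin n → ℝ} {K : NNReal} (hE : LipschitzWith K E)
    {P Q : ℝ → Fin n → ℝ}
    (hPc : ContinuousOn P (Set.Icc (0:ℝ) T))
    (hQc : ContinuousOn Q (Set.Icc (0:ℝ) T))
    (hPQint : ∀ t ∈ Set.Icc (0:ℝ) T, ∀ i, P t i - Q t i = (1 / Real.Gamma β) *
      ∫ s in (0:ℝ)..t, (t - s) ^ (β - 1) * (E (P s) i - E (Q s) i))
    {h : ℝ} (hh : 0 < h) (hhK : (K:ℝ) * h ^ β ≤ β * Real.Gamma β / 2)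
    {a : ℝ} (ha : a ∈ Set.Icc (0:ℝ) T)
    (hPQ : ∀ s ∈ Set.Icc (0:ℝ) a, P s = Q s) :
    ∀ s ∈ Set.Icc (0:ℝ) (min (a + h) T), P s = Q s := by
  have hΓ : 0 < Real.Gamma β := Real.Gamma_pos_of_pos hβ
  set b := min (a + h) T with hbdef
  have hbT : b ≤ T := min_le_right _ _
  have hab : a ≤ b := le_min (by linarith [hh]) ha.2
  have hb0 : (0:ℝ) ≤ b := le_trans ha.1 hab
  set g : ℝ → ℝ := fun t => ‖P t - Q t‖ with hgdef
  have hgc : ContinuousOn g (Set.Icc 0 b) :=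
    ((hPc.sub hQc).norm).mono (Set.Icc_subset_Icc le_rfl hbT)
  obtain ⟨ts, htsmem, htsmax⟩ :=
    isCompact_Icc.exists_isMaxOn ⟨0, Set.left_mem_Icc.2 hb0⟩ hgc
  set M : ℝ := g ts with hMdef
  have hM0 : 0 ≤ M := norm_nonneg _
  have hmax : ∀ s ∈ Set.Icc (0:ℝ) b, g s ≤ M := fun s hs => htsmax hs
  -- key bound
  have key : ∀ t ∈ Set.Icc (0:ℝ) b, g t ≤ M / 2 := by
    intro t ht
    rcases le_or_gt t a with hta | hta
    · have : P t = Q t := hPQ t ⟨ht.1, hta⟩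
      simp [hgdef, this, sub_self]
      linarith
    · have ht0 : (0:ℝ) ≤ t := ht.1
      have htT : t ≤ T := le_trans ht.2 hbT
      have hEPc : ∀ i, ContinuousOn (fun s => E (P s) i - E (Q s) i) (Set.Icc 0 t) := by
        intro i
        exact (((continuous_apply i).comp hE.continuous).comp_continuousOn
            (hPc.mono (Set.Icc_subset_Icc le_rfl htT))).sub
          (((continuous_apply i).comp hE.continuous).comp_continuousOn
            (hQc.mono (Set.Icc_subset_Icc le_rfl htT)))
      have hbound : ∀ i, |P t i - Q t i| ≤ M / 2 := by
        intro i
        have hint : IntervalIntegrable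
            (fun s => (t - s) ^ (β - 1) * (E (P s) i - E (Q s) i)) volume 0 t :=
          frac_integrable hβ ht0 (hEPc i)
        have hint1 : IntervalIntegrable (fun s => (t - s) ^ (β - 1) * (E (P s) i - E (Q s) i)) volume 0 a := hint.mono_set (by
          rw [Set.uIcc_of_le ht0, Set.uIcc_of_le ha.1]
          exact Set.Icc_subset_Icc le_rfl hta.le)
        have hint2 : IntervalIntegrable (fun s => (t - s) ^ (β - 1) * (E (P s) i - E (Q s) i)) volume a t := hint.mono_set (by
          rw [Set.uIcc_of_le ht0, Set.uIcc_of_le hta.le]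
          exact Set.Icc_subset_Icc ha.1 le_rfl)
        have hsplit : (∫ s in (0:ℝ)..t, (t - s) ^ (β - 1) * (E (P s) i - E (Q s) i))
            = ∫ s in a..t, (t - s) ^ (β - 1) * (E (P s) i - E (Q s) i) := by
          rw [← intervalIntegral.integral_add_adjacent_intervals hint1 hint2]
          have hz : (∫ s in (0:ℝ)..a, (t - s) ^ (β - 1) * (E (P s) i - E (Q s) i)) = 0 := by
            rw [intervalIntegral.integral_congr (g := fun _ => (0:ℝ))]
            · simp
            · intro s hs
              rw [Set.uIcc_of_le ha.1] at hs
              show (t - s) ^ (β - 1) * (E (P s) i - E (Q s) i) = 0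
              rw [hPQ s hs]
              ring
          rw [hz, zero_add]
        -- compare with constant bound
        have hintc : IntervalIntegrable
            (fun s => (t - s) ^ (β - 1) * ((K : ℝ) * M)) volume 0 t :=
          frac_integrable hβ ht0 continuousOn_const
        have hintc2 : IntervalIntegrable (fun s => (t - s) ^ (β - 1) * ((K : ℝ) * M)) volume a t := hintc.mono_set (by
          rw [Set.uIcc_of_le ht0, Set.uIcc_of_le hta.le]
          exact Set.Icc_subset_Icc ha.1 le_rfl)
        have habs : |∫ s in a..t, (t - s) ^ (β - 1) * (E (P s) i - E (Q s) i)|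
            ≤ ∫ s in a..t, (t - s) ^ (β - 1) * ((K : ℝ) * M) := by
          calc |∫ s in a..t, (t - s) ^ (β - 1) * (E (P s) i - E (Q s) i)|
              ≤ ∫ s in a..t, |(t - s) ^ (β - 1) * (E (P s) i - E (Q s) i)| :=
                intervalIntegral.abs_integral_le_integral_abs hta.le
            _ ≤ ∫ s in a..t, (t - s) ^ (β - 1) * ((K : ℝ) * M) := by
                apply intervalIntegral.integral_mono_on hta.le hint2.abs hintc2
                intro s hs
                rw [abs_mul, abs_of_nonneg (Real.rpow_nonneg (by linarith [hs.2]) _)]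
                apply mul_le_mul_of_nonneg_left _ (Real.rpow_nonneg (by linarith [hs.2]) _)
                have h1 : |E (P s) i - E (Q s) i| ≤ ‖E (P s) - E (Q s)‖ := by
                  have := norm_le_pi_norm (E (P s) - E (Q s)) i
                  simpa using this
                have h2 : ‖E (P s) - E (Q s)‖ ≤ (K:ℝ) * ‖P s - Q s‖ := by
                  have := hE.dist_le_mul (P s) (Q s)
                  simpa [dist_eq_norm] using this
                have h3 : ‖P s - Q s‖ ≤ M := hmax s ⟨le_trans ha.1 hs.1, le_trans hs.2 ht.2⟩
                calc |E (P s) i - E (Q s) i| ≤ (K:ℝ) * ‖P s - Q s‖ := le_trans h1 h2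
                  _ ≤ (K:ℝ) * M := by
                      exact mul_le_mul_of_nonneg_left h3 (K.coe_nonneg)
        have hval : (∫ s in a..t, (t - s) ^ (β - 1) * ((K : ℝ) * M))
            = (K:ℝ) * M * ((t - a) ^ β / β) := by
          rw [intervalIntegral.integral_mul_const]
          have := intervalIntegral.integral_comp_sub_left (fun x : ℝ => x ^ (β - 1)) t
            (a := a) (b := t)
          rw [this, sub_self, integral_rpow (Or.inl (by linarith)),
            Real.zero_rpow (by linarith)]
          ring_nf
        have hpow : (t - a) ^ β ≤ h ^ β := by
          apply Real.rpow_le_rpow (by linarith) _ hβ.le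
          have : t ≤ a + h := le_trans ht.2 (min_le_left _ _)
          linarith
        have hfin : |P t i - Q t i| ≤ (1 / Real.Gamma β) * ((K:ℝ) * M * (h ^ β / β)) := by
          rw [hPQint t ⟨ht0, htT⟩ i, hsplit]
          rw [abs_mul, abs_of_nonneg (by positivity : (0:ℝ) ≤ 1 / Real.Gamma β)]
          apply mul_le_mul_of_nonneg_left _ (by positivity)
          calc |∫ s in a..t, (t - s) ^ (β - 1) * (E (P s) i - E (Q s) i)|
              ≤ (K:ℝ) * M * ((t - a) ^ β / β) := by rw [← hval]; exact habs
            _ ≤ (K:ℝ) * M * (h ^ β / β) := by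
                apply mul_le_mul_of_nonneg_left _ (by positivity)
                gcongr
        have heq : (1 / Real.Gamma β) * ((K:ℝ) * M * (h ^ β / β))
            = M * ((K:ℝ) * h ^ β) / (β * Real.Gamma β) := by
          field_simp
        have hle : M * ((K:ℝ) * h ^ β) / (β * Real.Gamma β) ≤ M / 2 := by
          rw [div_le_iff₀ (by positivity)]
          nlinarith [mul_le_mul_of_nonneg_left hhK hM0]
        calc |P t i - Q t i| ≤ (1 / Real.Gamma β) * ((K:ℝ) * M * (h ^ β / β)) := hfin
          _ ≤ M / 2 := by rw [heq]; exact hle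
      exact (pi_norm_le_iff_of_nonneg (by linarith)).2 fun i => by
        simpa [Real.norm_eq_abs] using hbound i
  have hM2 : M ≤ 0 := by
    have := key ts htsmem
    simp only [hMdef] at *
    linarith
  intro s hs
  have h1 : g s ≤ 0 := le_trans (key s hs) (by linarith)
  have h2 : ‖P s - Q s‖ = 0 := le_antisymm h1 (norm_nonneg _)
  exact sub_eq_zero.1 (norm_eq_zero.1 h2)


/-- **Uniqueness of the equilibrium trajectory of the fractional evolutionary
game.** If `E` is Lipschitz and `P, Q : [0,T] → ℝⁿ` are continuous solutions of
the Volterra equation `P(t) = P⁰ + (1/Γ(β)) ∫₀ᵗ (t−s)^{β−1} E(P(s)) ds`,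
then `P = Q` on `[0,T]`. -/
theorem stmt_8 (n : ℕ) (β T : ℝ) (hβ : 0 < β) (hT : 0 < T)
    (P0 : Fin n → ℝ) (E : (Fin n → ℝ) → Fin n → ℝ)
    (K : NNReal) (hE : LipschitzWith K E)
    (P Q : ℝ → Fin n → ℝ)
    (hPc : ContinuousOn P (Set.Icc (0:ℝ) T))
    (hQc : ContinuousOn Q (Set.Icc (0:ℝ) T))
    (hP : ∀ t ∈ Set.Icc (0:ℝ) T, ∀ i, P t i = P0 i + (1 / Real.Gamma β) *
      ∫ s in (0:ℝ)..t, (t - s) ^ (β - 1) * E (P s) i)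
    (hQ : ∀ t ∈ Set.Icc (0:ℝ) T, ∀ i, Q t i = P0 i + (1 / Real.Gamma β) *
      ∫ s in (0:ℝ)..t, (t - s) ^ (β - 1) * E (Q s) i) :
    ∀ t ∈ Set.Icc (0:ℝ) T, P t = Q t := by
  have hΓ : 0 < Real.Gamma β := Real.Gamma_pos_of_pos hβ
  -- difference integral identity
  have hPQint : ∀ t ∈ Set.Icc (0:ℝ) T, ∀ i, P t i - Q t i = (1 / Real.Gamma β) *
      ∫ s in (0:ℝ)..t, (t - s) ^ (β - 1) * (E (P s) i - E (Q s) i) := by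
    intro t ht i
    have hcP : ContinuousOn (fun s => E (P s) i) (Set.Icc 0 t) :=
      ((continuous_apply i).comp hE.continuous).comp_continuousOn
        (hPc.mono (Set.Icc_subset_Icc le_rfl ht.2))
    have hcQ : ContinuousOn (fun s => E (Q s) i) (Set.Icc 0 t) :=
      ((continuous_apply i).comp hE.continuous).comp_continuousOn
        (hQc.mono (Set.Icc_subset_Icc le_rfl ht.2))
    have hiP := frac_integrable hβ ht.1 hcP
    have hiQ := frac_integrable hβ ht.1 hcQ
    rw [hP t ht i, hQ t ht i]
    have hsub : (∫ s in (0:ℝ)..t, (t - s) ^ (β - 1) * (E (P s) i - E (Q s) i))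
        = (∫ s in (0:ℝ)..t, (t - s) ^ (β - 1) * E (P s) i)
          - ∫ s in (0:ℝ)..t, (t - s) ^ (β - 1) * E (Q s) i := by
      rw [← intervalIntegral.integral_sub hiP hiQ]
      congr 1
      funext s
      ring
    rw [hsub]
    ring
  -- choose the step size h
  set h : ℝ := (β * Real.Gamma β / (2 * ((K:ℝ) + 1))) ^ (β⁻¹) with hhdef
  have hbase : 0 < β * Real.Gamma β / (2 * ((K:ℝ) + 1)) := by positivity
  have hh : 0 < h := Real.rpow_pos_of_pos hbase _
  have hhβ : h ^ β = β * Real.Gamma β / (2 * ((K:ℝ) + 1)) :=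
    Real.rpow_inv_rpow hbase.le hβ.ne'
  have hhK : (K:ℝ) * h ^ β ≤ β * Real.Gamma β / 2 := by
    rw [hhβ]
    have hK0 : (0:ℝ) ≤ (K:ℝ) := K.coe_nonneg
    rw [← mul_div_assoc, div_le_div_iff₀ (by positivity) (by norm_num : (0:ℝ) < 2)]
    nlinarith [mul_pos hβ hΓ]
  -- the set where P = Q
  set A : Set ℝ := {a | a ∈ Set.Icc (0:ℝ) T ∧ ∀ s ∈ Set.Icc (0:ℝ) a, P s = Q s} with hAdef
  have h0A : (0:ℝ) ∈ A := by
    refine ⟨⟨le_refl _, hT.le⟩, ?_⟩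
    intro s hs
    have hs0 : s = 0 := le_antisymm hs.2 hs.1
    subst hs0
    funext i
    have := hPQint 0 ⟨le_refl _, hT.le⟩ i
    simpa [intervalIntegral.integral_same, sub_eq_zero] using this
  have hbdd : BddAbove A := ⟨T, fun x hx => hx.1.2⟩
  set c : ℝ := sSup A with hcdef
  have hc0 : 0 ≤ c := le_csSup hbdd h0A
  have hcT : c ≤ T := csSup_le ⟨0, h0A⟩ fun x hx => hx.1.2
  -- P = Q on [0, c)
  have hIco : ∀ s ∈ Set.Ico (0:ℝ) c, P s = Q s := by
    intro s hs
    obtain ⟨a, haA, hsa⟩ := exists_lt_of_lt_csSup ⟨0, h0A⟩ hs.2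
    exact haA.2 s ⟨hs.1, hsa.le⟩
  -- P c = Q c by continuity
  have hcc : P c = Q c := by
    rcases eq_or_lt_of_le hc0 with hc0' | hc0'
    · exact h0A.2 c ⟨hc0'.le, hc0'.ge⟩
    · have hne : (Filter.NeBot (nhdsWithin c (Set.Ioo 0 c))) := by
        rw [nhdsWithin_Ioo_eq_nhdsLT hc0']
        exact nhdsLT_neBot c
      have hsubset : Set.Ioo (0:ℝ) c ⊆ Set.Icc 0 T :=
        fun x hx => ⟨hx.1.le, le_trans hx.2.le hcT⟩
      have htP : Filter.Tendsto P (nhdsWithin c (Set.Ioo 0 c)) (nhds (P c)) :=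
        (hPc c ⟨hc0, hcT⟩).mono_left
          (nhdsWithin_mono _ hsubset)
      have htQ : Filter.Tendsto Q (nhdsWithin c (Set.Ioo 0 c)) (nhds (Q c)) :=
        (hQc c ⟨hc0, hcT⟩).mono_left
          (nhdsWithin_mono _ hsubset)
      have htP' : Filter.Tendsto P (nhdsWithin c (Set.Ioo 0 c)) (nhds (Q c)) := by
        refine htQ.congr' ?_
        filter_upwards [self_mem_nhdsWithin] with x hx
        exact (hIco x ⟨hx.1.le, hx.2⟩).symm
      exact tendsto_nhds_unique htP htP'
  have hcA : c ∈ A := by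
    refine ⟨⟨hc0, hcT⟩, ?_⟩
    intro s hs
    rcases lt_or_eq_of_le hs.2 with hsc | hsc
    · exact hIco s ⟨hs.1, hsc⟩
    · rw [hsc]; exact hcc
  -- c must equal T
  have hcT' : c = T := by
    by_contra hne
    have hcltT : c < T := lt_of_le_of_ne hcT hne
    have hstep := ext_step hβ hE hPc hQc hPQint hh hhK ⟨hc0, hcT⟩ hcA.2
    have hminA : min (c + h) T ∈ A := by
      refine ⟨⟨le_min (by linarith) hT.le, min_le_right _ _⟩, hstep⟩
    have : min (c + h) T ≤ c := le_csSup hbdd hminA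
    have : c < min (c + h) T := lt_min (by linarith) hcltT
    linarith
  intro t ht
  exact hcA.2 t ⟨ht.1, by rw [hcT']; exact ht.2⟩
end

section
/- Let n ∈ ℕ, β > 0, T > 0, P⁰ ∈ ℝⁿ, and let E : ℝⁿ → ℝⁿ be Lipschitz continuous. Then there exists exactly one continuous function P : [0,T] → ℝⁿ satisfying P(t) = P⁰ + (1/Γ(β)) ∫₀ᵗ (t−s)^{β−1} E(P(s)) ds for all t ∈ [0,T]. -/
open MeasureTheory Set Filter

namespace Stmt9

lemma ker_int {β : ℝ} (hβ : 0 < β) (c a b : ℝ) :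
    IntervalIntegrable (fun s => (c - s) ^ (β - 1)) volume a b := by
  have h := (intervalIntegral.intervalIntegrable_rpow' (a := c - a) (b := c - b) (r := β - 1)
    (by linarith)).comp_sub_left c
  simpa using h

lemma ker_smul_int {n : ℕ} {β : ℝ} (hβ : 0 < β) {g : ℝ → Fin n → ℝ} (hg : Continuous g)
    {M : ℝ} (hM : ∀ s, ‖g s‖ ≤ M) (c a b : ℝ) :
    IntervalIntegrable (fun s => (c - s) ^ (β - 1) • g s) volume a b := by
  have hker := ker_int hβ c a b
  rw [intervalIntegrable_iff] at hker ⊢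
  refine (hker.norm.mul_const M).mono'
    (hker.aestronglyMeasurable.smul hg.aestronglyMeasurable) ?_
  refine Eventually.of_forall fun s => ?_
  rw [norm_smul]
  exact mul_le_mul_of_nonneg_left (hM s) (norm_nonneg _)

lemma ker_eval {β : ℝ} (hβ : 0 < β) {a b c : ℝ} (hab : a ≤ b) (hbc : b ≤ c) :
    ∫ s in a..b, (c - s) ^ (β - 1) = ((c - a) ^ β - (c - b) ^ β) / β := by
  rw [intervalIntegral.integral_comp_sub_left (fun u : ℝ => u ^ (β - 1)) c,
    integral_rpow (Or.inl (by linarith : (-1:ℝ) < β - 1))]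
  have : β - 1 + 1 = β := by ring
  rw [this]

lemma F_mod {n : ℕ} {β : ℝ} (hβ : 0 < β) {g : ℝ → Fin n → ℝ} (hg : Continuous g)
    {M : ℝ} (hM : ∀ s, ‖g s‖ ≤ M) {t₁ t₂ : ℝ} (h0 : 0 ≤ t₁) (h12 : t₁ ≤ t₂) :
    ‖(∫ s in (0:ℝ)..t₂, (t₂ - s) ^ (β - 1) • g s) -
        ∫ s in (0:ℝ)..t₁, (t₁ - s) ^ (β - 1) • g s‖
      ≤ M / β * (|t₂ ^ β - t₁ ^ β| + 2 * (t₂ - t₁) ^ β) := by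
  have hM0 : 0 ≤ M := le_trans (norm_nonneg _) (hM 0)
  set X : Fin n → ℝ :=
    ∫ s in (0:ℝ)..t₁, ((t₂ - s) ^ (β - 1) - (t₁ - s) ^ (β - 1)) • g s with hX
  set Y : Fin n → ℝ := ∫ s in t₁..t₂, (t₂ - s) ^ (β - 1) • g s with hY
  have int2a := ker_smul_int hβ hg hM t₂ 0 t₁
  have int2b := ker_smul_int hβ hg hM t₂ t₁ t₂
  have int1a := ker_smul_int hβ hg hM t₁ 0 t₁
  have hdecomp : (∫ s in (0:ℝ)..t₂, (t₂ - s) ^ (β - 1) • g s) -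
      (∫ s in (0:ℝ)..t₁, (t₁ - s) ^ (β - 1) • g s) = X + Y := by
    rw [← intervalIntegral.integral_add_adjacent_intervals int2a int2b]
    have : X = (∫ s in (0:ℝ)..t₁, (t₂ - s) ^ (β - 1) • g s) -
        ∫ s in (0:ℝ)..t₁, (t₁ - s) ^ (β - 1) • g s := by
      rw [hX, ← intervalIntegral.integral_sub int2a int1a]
      congr 1
      funext s
      rw [sub_smul]
    rw [this]
    abel
  -- bound on Y
  have hYb : ‖Y‖ ≤ M / β * (t₂ - t₁) ^ β := by
    have hb : ∀ᵐ s ∂(volume.restrict (Set.uIoc t₁ t₂)),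
        ‖(t₂ - s) ^ (β - 1) • g s‖ ≤ (t₂ - s) ^ (β - 1) * M := by
      refine (ae_restrict_mem measurableSet_uIoc).mono fun s hs => ?_
      rw [Set.uIoc_of_le h12] at hs
      rw [norm_smul, Real.norm_eq_abs,
        abs_of_nonneg (Real.rpow_nonneg (by linarith [hs.2] : (0:ℝ) ≤ t₂ - s) _)]
      exact mul_le_mul_of_nonneg_left (hM s) (Real.rpow_nonneg (by linarith [hs.2]) _)
    have h1 := intervalIntegral.norm_integral_le_abs_of_norm_le hb
      ((ker_int hβ t₂ t₁ t₂).mul_const M)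
    rw [intervalIntegral.integral_mul_const, ker_eval hβ h12 le_rfl, sub_self,
      Real.zero_rpow hβ.ne', sub_zero] at h1
    calc ‖Y‖ ≤ |(t₂ - t₁) ^ β / β * M| := h1
      _ = M / β * (t₂ - t₁) ^ β := by
          rw [abs_of_nonneg (mul_nonneg (div_nonneg
            (Real.rpow_nonneg (by linarith : (0:ℝ) ≤ t₂ - t₁) β) hβ.le) hM0)]
          ring
  -- bound on X
  have hXb : ‖X‖ ≤ M / β * (|t₂ ^ β - t₁ ^ β| + (t₂ - t₁) ^ β) := by
    have habs : IntervalIntegrable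
        (fun s => |(t₂ - s) ^ (β - 1) - (t₁ - s) ^ (β - 1)|) volume 0 t₁ := by
      simpa [Real.norm_eq_abs] using ((ker_int hβ t₂ 0 t₁).sub (ker_int hβ t₁ 0 t₁)).norm
    have hb : ∀ᵐ s ∂(volume.restrict (Set.uIoc 0 t₁)),
        ‖((t₂ - s) ^ (β - 1) - (t₁ - s) ^ (β - 1)) • g s‖ ≤
          |(t₂ - s) ^ (β - 1) - (t₁ - s) ^ (β - 1)| * M := by
      refine Eventually.of_forall fun s => ?_
      rw [norm_smul, Real.norm_eq_abs]
      exact mul_le_mul_of_nonneg_left (hM s) (abs_nonneg _)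
    have h1 := intervalIntegral.norm_integral_le_abs_of_norm_le hb (habs.mul_const M)
    rw [intervalIntegral.integral_mul_const] at h1
    have hnn : 0 ≤ ∫ s in (0:ℝ)..t₁, |(t₂ - s) ^ (β - 1) - (t₁ - s) ^ (β - 1)| :=
      intervalIntegral.integral_nonneg h0 fun u _ => abs_nonneg _
    have hkey : (∫ s in (0:ℝ)..t₁, |(t₂ - s) ^ (β - 1) - (t₁ - s) ^ (β - 1)|) ≤
        (|t₂ ^ β - t₁ ^ β| + (t₂ - t₁) ^ β) / β := by
      have hA1 : (∫ s in (0:ℝ)..t₁, (t₁ - s) ^ (β - 1)) = t₁ ^ β / β := by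
        rw [ker_eval hβ h0 le_rfl, sub_self, Real.zero_rpow hβ.ne', sub_zero, sub_zero]
      have hA2 : (∫ s in (0:ℝ)..t₁, (t₂ - s) ^ (β - 1)) =
          (t₂ ^ β - (t₂ - t₁) ^ β) / β := by
        rw [ker_eval hβ h0 (by linarith), sub_zero]
      rcases le_total β 1 with hble | hbge
      · have hne : ∀ᵐ s : ℝ ∂volume, s ≠ t₁ := by
          rw [Filter.eventually_iff, mem_ae_iff]
          have : {s : ℝ | s ≠ t₁}ᶜ = {t₁} := by ext x; simp [not_not]
          rw [this]
          exact measure_singleton t₁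
        have hcongr : (∫ s in (0:ℝ)..t₁, |(t₂ - s) ^ (β - 1) - (t₁ - s) ^ (β - 1)|) =
            ∫ s in (0:ℝ)..t₁, ((t₁ - s) ^ (β - 1) - (t₂ - s) ^ (β - 1)) := by
          refine intervalIntegral.integral_congr_ae ?_
          filter_upwards [hne] with s hs hmem
          rw [Set.uIoc_of_le h0] at hmem
          have hs1 : 0 < t₁ - s := by
            rcases lt_of_le_of_ne hmem.2 hs with h
            linarith
          have := Real.rpow_le_rpow_of_nonpos hs1 (by linarith : t₁ - s ≤ t₂ - s)
            (by linarith : β - 1 ≤ 0)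
          rw [abs_of_nonpos (by linarith), neg_sub]
        rw [hcongr, intervalIntegral.integral_sub (ker_int hβ t₁ 0 t₁) (ker_int hβ t₂ 0 t₁),
          hA1, hA2]
        rw [div_sub_div_same, div_le_div_iff_of_pos_right hβ]
        have h3 : t₁ ^ β - t₂ ^ β ≤ |t₂ ^ β - t₁ ^ β| := by
          rw [abs_sub_comm]; exact le_abs_self _
        linarith
      · have hcongr : (∫ s in (0:ℝ)..t₁, |(t₂ - s) ^ (β - 1) - (t₁ - s) ^ (β - 1)|) =
            ∫ s in (0:ℝ)..t₁, ((t₂ - s) ^ (β - 1) - (t₁ - s) ^ (β - 1)) := by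
          refine intervalIntegral.integral_congr fun s hmem => ?_
          rw [Set.uIcc_of_le h0] at hmem
          have := Real.rpow_le_rpow (by linarith [hmem.2] : (0:ℝ) ≤ t₁ - s)
            (by linarith : t₁ - s ≤ t₂ - s) (by linarith : (0:ℝ) ≤ β - 1)
          rw [abs_of_nonneg (by linarith)]
        rw [hcongr, intervalIntegral.integral_sub (ker_int hβ t₂ 0 t₁) (ker_int hβ t₁ 0 t₁),
          hA1, hA2]
        rw [div_sub_div_same, div_le_div_iff_of_pos_right hβ]
        have h3 : t₂ ^ β - t₁ ^ β ≤ |t₂ ^ β - t₁ ^ β| := le_abs_self _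
        have h4 : (0:ℝ) ≤ (t₂ - t₁) ^ β := Real.rpow_nonneg (by linarith) _
        linarith
    calc ‖X‖ ≤ |(∫ s in (0:ℝ)..t₁, |(t₂ - s) ^ (β - 1) - (t₁ - s) ^ (β - 1)|) * M| := h1
      _ = (∫ s in (0:ℝ)..t₁, |(t₂ - s) ^ (β - 1) - (t₁ - s) ^ (β - 1)|) * M := by
          rw [abs_of_nonneg (mul_nonneg hnn hM0)]
      _ ≤ (|t₂ ^ β - t₁ ^ β| + (t₂ - t₁) ^ β) / β * M :=
          mul_le_mul_of_nonneg_right hkey hM0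
      _ = M / β * (|t₂ ^ β - t₁ ^ β| + (t₂ - t₁) ^ β) := by ring
  rw [hdecomp]
  calc ‖X + Y‖ ≤ ‖X‖ + ‖Y‖ := norm_add_le _ _
    _ ≤ M / β * (|t₂ ^ β - t₁ ^ β| + 2 * (t₂ - t₁) ^ β) := by
        have := hXb; have := hYb; nlinarith [abs_nonneg (t₂ ^ β - t₁ ^ β)]

lemma F_cont {n : ℕ} {β : ℝ} (hβ : 0 < β) {g : ℝ → Fin n → ℝ} (hg : Continuous g)
    {M : ℝ} (hM : ∀ s, ‖g s‖ ≤ M) :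
    ContinuousOn (fun t => ∫ s in (0:ℝ)..t, (t - s) ^ (β - 1) • g s) (Set.Ici 0) := by
  have hM0 : 0 ≤ M := le_trans (norm_nonneg _) (hM 0)
  intro t₀ ht₀
  have ht₀' : (0:ℝ) ≤ t₀ := ht₀
  rw [ContinuousWithinAt, tendsto_iff_norm_sub_tendsto_zero]
  set b : ℝ → ℝ := fun t => M / β * (|t ^ β - t₀ ^ β| + 2 * |t - t₀| ^ β) with hbdef
  have hbound : ∀ᶠ t in nhdsWithin t₀ (Set.Ici 0),
      ‖(∫ s in (0:ℝ)..t, (t - s) ^ (β - 1) • g s) -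
        ∫ s in (0:ℝ)..t₀, (t₀ - s) ^ (β - 1) • g s‖ ≤ b t := by
    filter_upwards [self_mem_nhdsWithin] with t ht
    have ht' : (0:ℝ) ≤ t := ht
    rcases le_total t₀ t with h | h
    · show _ ≤ M / β * (|t ^ β - t₀ ^ β| + 2 * |t - t₀| ^ β)
      rw [abs_of_nonneg (by linarith : (0:ℝ) ≤ t - t₀)]
      exact F_mod hβ hg hM ht₀' h
    · show _ ≤ M / β * (|t ^ β - t₀ ^ β| + 2 * |t - t₀| ^ β)
      rw [abs_sub_comm (t ^ β) (t₀ ^ β), abs_sub_comm t t₀,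
        abs_of_nonneg (by linarith : (0:ℝ) ≤ t₀ - t), norm_sub_rev]
      exact F_mod hβ hg hM ht' h
  refine squeeze_zero' (g := b) (Eventually.of_forall fun t => norm_nonneg _) hbound ?_
  · have hc1 : ContinuousAt (fun t : ℝ => t ^ β) t₀ :=
      Real.continuousAt_rpow_const t₀ β (Or.inr hβ.le)
    have hc2 : ContinuousAt (fun t : ℝ => |t - t₀| ^ β) t₀ := by
      have hin : ContinuousAt (fun t : ℝ => |t - t₀|) t₀ :=
        (continuous_abs.comp (continuous_id.sub continuous_const)).continuousAt
      have hout : ContinuousAt (fun x : ℝ => x ^ β) ((fun t : ℝ => |t - t₀|) t₀) := by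
        have h00 : (fun t : ℝ => |t - t₀|) t₀ = 0 := by simp
        rw [h00]
        exact Real.continuousAt_rpow_const 0 β (Or.inr hβ.le)
      exact ContinuousAt.comp (g := fun x : ℝ => x ^ β) (f := fun t : ℝ => |t - t₀|)
        (x := t₀) hout hin
    have hb : ContinuousAt b t₀ :=
      continuousAt_const.mul ((continuous_abs.continuousAt.comp
        (hc1.sub continuousAt_const)).add (continuousAt_const.mul hc2))
    have hb0 : b t₀ = 0 := by
      simp [hbdef, Real.zero_rpow hβ.ne']
    have := hb.continuousWithinAt (s := Set.Ici 0)
    rw [ContinuousWithinAt, hb0] at this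
    exact this

lemma gamma_tail {β : ℝ} (hβ : 0 < β) {lam : ℝ} (hlam : 0 < lam) {t : ℝ} (ht : 0 ≤ t) :
    (∫ u in (0:ℝ)..t, u ^ (β - 1) * Real.exp (-(lam * u)))
      ≤ (1 / lam) ^ β * Real.Gamma β := by
  have h0 : IntegrableOn (fun x : ℝ => Real.exp (-x) * x ^ (β - 1)) (Set.Ioi 0) :=
    Real.GammaIntegral_convergent hβ
  have h1 : IntegrableOn (fun u : ℝ => Real.exp (-(lam * u)) * (lam * u) ^ (β - 1))
      (Set.Ioi 0) := by
    have := (integrableOn_Ioi_comp_mul_left_iff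
      (fun x : ℝ => Real.exp (-x) * x ^ (β - 1)) 0 hlam).2 (by simpa using h0)
    simpa using this
  have hInt : IntegrableOn (fun u : ℝ => u ^ (β - 1) * Real.exp (-(lam * u)))
      (Set.Ioi 0) := by
    refine MeasureTheory.IntegrableOn.congr_fun (h1.const_mul ((lam ^ (β - 1))⁻¹)) ?_
      measurableSet_Ioi
    intro u hu
    have hu' : (0:ℝ) < u := hu
    show (lam ^ (β - 1))⁻¹ * (Real.exp (-(lam * u)) * (lam * u) ^ (β - 1))
      = u ^ (β - 1) * Real.exp (-(lam * u))
    rw [Real.mul_rpow hlam.le hu'.le]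
    field_simp [(Real.rpow_pos_of_pos hlam (β - 1)).ne']
  rw [intervalIntegral.integral_of_le ht]
  calc (∫ u in Set.Ioc 0 t, u ^ (β - 1) * Real.exp (-(lam * u)))
      ≤ ∫ u in Set.Ioi 0, u ^ (β - 1) * Real.exp (-(lam * u)) := by
        refine setIntegral_mono_set hInt ?_ (HasSubset.Subset.eventuallyLE Set.Ioc_subset_Ioi_self)
        filter_upwards [ae_restrict_mem measurableSet_Ioi] with u hu
        have hu' : (0:ℝ) < u := hu
        positivity
    _ = (1 / lam) ^ β * Real.Gamma β := Real.integral_rpow_mul_exp_neg_mul_Ioi hβ hlam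

lemma weight_int_le {β : ℝ} (hβ : 0 < β) {lam : ℝ} (hlam : 0 < lam) {t : ℝ} (ht : 0 ≤ t) :
    (∫ s in (0:ℝ)..t, (t - s) ^ (β - 1) * Real.exp (lam * s))
      ≤ Real.exp (lam * t) * ((1 / lam) ^ β * Real.Gamma β) := by
  have h1 : (∫ s in (0:ℝ)..t, (t - s) ^ (β - 1) * Real.exp (lam * s))
      = ∫ u in (0:ℝ)..t, u ^ (β - 1) * Real.exp (lam * (t - u)) := by
    have h := intervalIntegral.integral_comp_sub_left (a := 0) (b := t)
      (fun u : ℝ => u ^ (β - 1) * Real.exp (lam * (t - u))) t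
    simp only [sub_sub_cancel, sub_self, sub_zero] at h
    rw [← h]
  rw [h1]
  have h2 : (∫ u in (0:ℝ)..t, u ^ (β - 1) * Real.exp (lam * (t - u)))
      = Real.exp (lam * t) * ∫ u in (0:ℝ)..t, u ^ (β - 1) * Real.exp (-(lam * u)) := by
    rw [← intervalIntegral.integral_const_mul]
    refine intervalIntegral.integral_congr fun u _ => ?_
    rw [mul_sub, Real.exp_sub]
    rw [Real.exp_neg (lam * u)]
    field_simp
  rw [h2]
  exact mul_le_mul_of_nonneg_left (gamma_tail hβ hlam ht) (Real.exp_pos _).le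

variable {n : ℕ} {β T : ℝ}

lemma ext_bound (h0T : (0:ℝ) ≤ T) {E : (Fin n → ℝ) → Fin n → ℝ} (hE : Continuous E)
    (f : C(Set.Icc (0:ℝ) T, Fin n → ℝ)) (s : ℝ) :
    ‖E (Set.IccExtend h0T f s)‖ ≤ ‖(ContinuousMap.mk E hE).comp f‖ :=
  ((ContinuousMap.mk E hE).comp f).norm_coe_le_norm (Set.projIcc 0 T h0T s)

noncomputable def Phi (hβ : 0 < β) (h0T : (0:ℝ) ≤ T) (P0 : Fin n → ℝ)
    {E : (Fin n → ℝ) → Fin n → ℝ} (hE : Continuous E) (c : ℝ)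
    (f : C(Set.Icc (0:ℝ) T, Fin n → ℝ)) : C(Set.Icc (0:ℝ) T, Fin n → ℝ) :=
  ⟨Set.restrict _ (fun t : ℝ =>
      P0 + c • ∫ s in (0:ℝ)..t, (t - s) ^ (β - 1) • E (Set.IccExtend h0T f s)), by
    have hg : Continuous fun s => E (Set.IccExtend h0T f s) :=
      hE.comp f.continuous.Icc_extend'
    have hcont := F_cont hβ hg (ext_bound h0T hE f)
    exact ContinuousOn.restrict (continuousOn_const.add
      ((hcont.mono fun x (hx : x ∈ Set.Icc (0:ℝ) T) => hx.1).const_smul c))⟩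

lemma Phi_apply (hβ : 0 < β) (h0T : (0:ℝ) ≤ T) (P0 : Fin n → ℝ)
    {E : (Fin n → ℝ) → Fin n → ℝ} (hE : Continuous E) (c : ℝ)
    (f : C(Set.Icc (0:ℝ) T, Fin n → ℝ)) (x : Set.Icc (0:ℝ) T) :
    Phi hβ h0T P0 hE c f x =
      P0 + c • ∫ s in (0:ℝ)..(x:ℝ), ((x:ℝ) - s) ^ (β - 1) • E (Set.IccExtend h0T f s) := rfl

noncomputable def wmap (lam : ℝ) (f : C(Set.Icc (0:ℝ) T, Fin n → ℝ)) :
    C(Set.Icc (0:ℝ) T, Fin n → ℝ) :=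
  ⟨fun t => Real.exp (lam * (t : ℝ)) • f t,
    (Real.continuous_exp.comp (continuous_const.mul continuous_subtype_val)).smul f.continuous⟩

lemma wmap_apply (lam : ℝ) (f : C(Set.Icc (0:ℝ) T, Fin n → ℝ)) (x : Set.Icc (0:ℝ) T) :
    wmap lam f x = Real.exp (lam * (x : ℝ)) • f x := rfl

lemma wmap_wmap (lam lam' : ℝ) (f : C(Set.Icc (0:ℝ) T, Fin n → ℝ)) :
    wmap lam (wmap lam' f) = wmap (lam + lam') f := by
  ext x i
  simp only [wmap_apply, smul_smul, ← Real.exp_add, add_mul]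

lemma wmap_zero (f : C(Set.Icc (0:ℝ) T, Fin n → ℝ)) : wmap 0 f = f := by
  ext x i
  simp [wmap_apply]

lemma wmap_cancel (lam : ℝ) (f : C(Set.Icc (0:ℝ) T, Fin n → ℝ)) :
    wmap lam (wmap (-lam) f) = f := by
  rw [wmap_wmap, add_neg_cancel, wmap_zero]

lemma wmap_cancel' (lam : ℝ) (f : C(Set.Icc (0:ℝ) T, Fin n → ℝ)) :
    wmap (-lam) (wmap lam f) = f := by
  rw [wmap_wmap, neg_add_cancel, wmap_zero]

lemma int_apply {β : ℝ} (hβ : 0 < β) {g : ℝ → Fin n → ℝ} (hg : Continuous g)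
    {M : ℝ} (hM : ∀ s, ‖g s‖ ≤ M) (c a b : ℝ) (i : Fin n) :
    (∫ s in a..b, (c - s) ^ (β - 1) • g s) i
      = ∫ s in a..b, (c - s) ^ (β - 1) * g s i := by
  have h := (ContinuousLinearMap.proj (R := ℝ) (φ := fun _ : Fin n => ℝ) i
    ).intervalIntegral_comp_comm (ker_smul_int hβ hg hM c a b)
  simpa [ContinuousLinearMap.proj_apply, smul_eq_mul] using h.symm

lemma contract_est (hβ : 0 < β) (h0T : (0:ℝ) ≤ T) (P0 : Fin n → ℝ)
    {E : (Fin n → ℝ) → Fin n → ℝ} {K : NNReal} (hE : LipschitzWith K E)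
    {lam : ℝ} (hlam : 0 < lam) {D : ℝ} (hD : 0 ≤ D)
    (f g : C(Set.Icc (0:ℝ) T, Fin n → ℝ))
    (hfg : ∀ s : Set.Icc (0:ℝ) T, ‖f s - g s‖ ≤ D * Real.exp (lam * (s : ℝ)))
    (x : Set.Icc (0:ℝ) T) :
    ‖Phi hβ h0T P0 hE.continuous (1 / Real.Gamma β) f x -
        Phi hβ h0T P0 hE.continuous (1 / Real.Gamma β) g x‖
      ≤ (K : ℝ) * D * (1 / lam) ^ β * Real.exp (lam * (x : ℝ)) := by
  set t : ℝ := (x : ℝ) with htdef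
  have hΓ : 0 < Real.Gamma β := Real.Gamma_pos_of_pos hβ
  have ht0 : 0 ≤ t := x.2.1
  have htT : t ≤ T := x.2.2
  have hgf : Continuous fun s => E (Set.IccExtend h0T f s) :=
    hE.continuous.comp f.continuous.Icc_extend'
  have hgg : Continuous fun s => E (Set.IccExtend h0T g s) :=
    hE.continuous.comp g.continuous.Icc_extend'
  have intf := ker_smul_int hβ hgf (ext_bound h0T hE.continuous f) t 0 t
  have intg := ker_smul_int hβ hgg (ext_bound h0T hE.continuous g) t 0 t
  have hdiff : Phi hβ h0T P0 hE.continuous (1 / Real.Gamma β) f x -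
      Phi hβ h0T P0 hE.continuous (1 / Real.Gamma β) g x
      = (1 / Real.Gamma β) • ∫ s in (0:ℝ)..t, (t - s) ^ (β - 1) •
          (E (Set.IccExtend h0T f s) - E (Set.IccExtend h0T g s)) := by
    rw [Phi_apply, Phi_apply]
    have : (∫ s in (0:ℝ)..t, (t - s) ^ (β - 1) •
        (E (Set.IccExtend h0T f s) - E (Set.IccExtend h0T g s)))
        = (∫ s in (0:ℝ)..t, (t - s) ^ (β - 1) • E (Set.IccExtend h0T f s))
          - ∫ s in (0:ℝ)..t, (t - s) ^ (β - 1) • E (Set.IccExtend h0T g s) := by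
      rw [← intervalIntegral.integral_sub intf intg]
      exact intervalIntegral.integral_congr fun s _ => smul_sub _ _ _
    rw [this, smul_sub]
    abel
  rw [hdiff]
  have hker_exp : IntervalIntegrable
      (fun s => ((t - s) ^ (β - 1) * Real.exp (lam * s)) * ((K : ℝ) * D)) volume 0 t :=
    (((ker_int hβ t 0 t).mul_continuousOn
      ((Real.continuous_exp.comp (continuous_const.mul continuous_id)).continuousOn))).mul_const _
  have hbd : ∀ᵐ s ∂(volume.restrict (Set.uIoc 0 t)),
      ‖(t - s) ^ (β - 1) • (E (Set.IccExtend h0T f s) - E (Set.IccExtend h0T g s))‖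
        ≤ ((t - s) ^ (β - 1) * Real.exp (lam * s)) * ((K : ℝ) * D) := by
    refine (ae_restrict_mem measurableSet_uIoc).mono fun s hs => ?_
    rw [Set.uIoc_of_le ht0] at hs
    have hsmem : s ∈ Set.Icc (0:ℝ) T := ⟨hs.1.le, le_trans hs.2 htT⟩
    have hker_nn : (0:ℝ) ≤ (t - s) ^ (β - 1) :=
      Real.rpow_nonneg (by linarith [hs.2] : (0:ℝ) ≤ t - s) _
    rw [norm_smul, Real.norm_eq_abs, abs_of_nonneg hker_nn]
    have h1 : ‖E (Set.IccExtend h0T f s) - E (Set.IccExtend h0T g s)‖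
        ≤ (K : ℝ) * ‖f ⟨s, hsmem⟩ - g ⟨s, hsmem⟩‖ := by
      rw [Set.IccExtend_of_mem h0T _ hsmem, Set.IccExtend_of_mem h0T _ hsmem,
        ← dist_eq_norm, ← dist_eq_norm]
      exact hE.dist_le_mul _ _
    have h2 : ‖f ⟨s, hsmem⟩ - g ⟨s, hsmem⟩‖ ≤ D * Real.exp (lam * s) := hfg ⟨s, hsmem⟩
    calc (t - s) ^ (β - 1) * ‖E (Set.IccExtend h0T f s) - E (Set.IccExtend h0T g s)‖
        ≤ (t - s) ^ (β - 1) * ((K : ℝ) * (D * Real.exp (lam * s))) := by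
          refine mul_le_mul_of_nonneg_left (le_trans h1 ?_) hker_nn
          exact mul_le_mul_of_nonneg_left h2 K.2
      _ = ((t - s) ^ (β - 1) * Real.exp (lam * s)) * ((K : ℝ) * D) := by ring
  have hnorm := intervalIntegral.norm_integral_le_abs_of_norm_le hbd hker_exp
  have hval : (∫ s in (0:ℝ)..t, ((t - s) ^ (β - 1) * Real.exp (lam * s)) * ((K : ℝ) * D))
      = (∫ s in (0:ℝ)..t, (t - s) ^ (β - 1) * Real.exp (lam * s)) * ((K : ℝ) * D) :=
    intervalIntegral.integral_mul_const _ _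
  have hint_nn : 0 ≤ ∫ s in (0:ℝ)..t, (t - s) ^ (β - 1) * Real.exp (lam * s) := by
    refine intervalIntegral.integral_nonneg ht0 fun u hu => ?_
    have : (0:ℝ) ≤ t - u := by linarith [hu.2]
    positivity
  have habs : |(∫ s in (0:ℝ)..t, ((t - s) ^ (β - 1) * Real.exp (lam * s)) * ((K : ℝ) * D))|
      = (∫ s in (0:ℝ)..t, (t - s) ^ (β - 1) * Real.exp (lam * s)) * ((K : ℝ) * D) := by
    rw [hval]
    exact abs_of_nonneg (mul_nonneg hint_nn (mul_nonneg K.2 hD))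
  rw [norm_smul, Real.norm_eq_abs, abs_of_nonneg (by positivity : (0:ℝ) ≤ 1 / Real.Gamma β)]
  calc (1 / Real.Gamma β) *
      ‖∫ s in (0:ℝ)..t, (t - s) ^ (β - 1) •
        (E (Set.IccExtend h0T f s) - E (Set.IccExtend h0T g s))‖
      ≤ (1 / Real.Gamma β) * ((∫ s in (0:ℝ)..t, (t - s) ^ (β - 1) * Real.exp (lam * s))
          * ((K : ℝ) * D)) := by
        refine mul_le_mul_of_nonneg_left ?_ (by positivity)
        rw [← habs]
        exact hnorm
    _ ≤ (1 / Real.Gamma β) * ((Real.exp (lam * t) * ((1 / lam) ^ β * Real.Gamma β))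
          * ((K : ℝ) * D)) := by
        refine mul_le_mul_of_nonneg_left
          (mul_le_mul_of_nonneg_right (weight_int_le hβ hlam ht0)
            (mul_nonneg K.2 hD)) (by positivity)
    _ = (K : ℝ) * D * (1 / lam) ^ β * Real.exp (lam * t) := by
        field_simp

end Stmt9

open Stmt9 Set MeasureTheory in
/-- **Existence and uniqueness of the equilibrium trajectory of the fractional
evolutionary game.** If `E` is Lipschitz, there is exactly one continuous
`P : [0,T] → ℝⁿ` with `P(t) = P⁰ + (1/Γ(β)) ∫₀ᵗ (t−s)^{β−1} E(P(s)) ds`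
for all `t ∈ [0,T]`. -/
theorem stmt_9 (n : ℕ) (β T : ℝ) (hβ : 0 < β) (hT : 0 < T)
    (P0 : Fin n → ℝ) (E : (Fin n → ℝ) → Fin n → ℝ)
    (K : NNReal) (hE : LipschitzWith K E) :
    ∃ P : ℝ → Fin n → ℝ,
      (ContinuousOn P (Set.Icc (0:ℝ) T) ∧
        ∀ t ∈ Set.Icc (0:ℝ) T, ∀ i, P t i = P0 i + (1 / Real.Gamma β) *
          ∫ s in (0:ℝ)..t, (t - s) ^ (β - 1) * E (P s) i) ∧
      ∀ Q : ℝ → Fin n → ℝ,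
        (ContinuousOn Q (Set.Icc (0:ℝ) T) ∧
          ∀ t ∈ Set.Icc (0:ℝ) T, ∀ i, Q t i = P0 i + (1 / Real.Gamma β) *
            ∫ s in (0:ℝ)..t, (t - s) ^ (β - 1) * E (Q s) i) →
        ∀ t ∈ Set.Icc (0:ℝ) T, Q t = P t := by
  classical
  have h0T : (0:ℝ) ≤ T := hT.le
  have h2K : (0:ℝ) < 2 * (K:ℝ) + 1 := by positivity
  set lam : ℝ := (2 * (K:ℝ) + 1) ^ (β⁻¹) with hlam_def
  have hlam : 0 < lam := Real.rpow_pos_of_pos h2K _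
  have hlam_pow : lam ^ β = 2 * (K:ℝ) + 1 := by
    rw [hlam_def, ← Real.rpow_mul h2K.le, inv_mul_cancel₀ hβ.ne', Real.rpow_one]
  have hfrac : (1 / lam) ^ β = 1 / (2 * (K:ℝ) + 1) := by
    rw [Real.div_rpow zero_le_one hlam.le, Real.one_rpow, hlam_pow]
  set κ : NNReal := K / (2 * K + 1) with hκ
  have hκcoe : (κ : ℝ) = (K : ℝ) / (2 * (K:ℝ) + 1) := by
    rw [hκ]; push_cast; ring
  have hκ1 : κ < 1 := by
    rw [hκ, div_lt_one (add_pos_of_nonneg_of_pos zero_le one_pos)]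
    exact lt_of_le_of_lt (by rw [two_mul]; exact le_add_of_nonneg_right zero_le)
      (lt_add_of_pos_right _ one_pos)
  set Psi : C(Set.Icc (0:ℝ) T, Fin n → ℝ) → C(Set.Icc (0:ℝ) T, Fin n → ℝ) :=
    fun f => wmap (-lam) (Phi hβ h0T P0 hE.continuous (1 / Real.Gamma β) (wmap lam f))
    with hPsi
  have hcontr : ContractingWith κ Psi := by
    refine ⟨hκ1, LipschitzWith.of_dist_le_mul fun f g => ?_⟩
    refine (ContinuousMap.dist_le (mul_nonneg κ.2 dist_nonneg)).mpr fun x => ?_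
    have hfg : ∀ s : Set.Icc (0:ℝ) T,
        ‖(wmap lam f) s - (wmap lam g) s‖ ≤ dist f g * Real.exp (lam * (s : ℝ)) := by
      intro s
      rw [wmap_apply, wmap_apply, ← smul_sub, norm_smul, Real.norm_eq_abs,
        abs_of_nonneg (Real.exp_pos _).le, mul_comm]
      refine mul_le_mul_of_nonneg_right ?_ (Real.exp_pos _).le
      rw [← dist_eq_norm]
      exact ContinuousMap.dist_apply_le_dist s
    have hest := contract_est hβ h0T P0 hE hlam dist_nonneg
      (wmap lam f) (wmap lam g) hfg x
    rw [dist_eq_norm]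
    have hdiff2 : Psi f x - Psi g x = Real.exp (-lam * (x:ℝ)) •
        (Phi hβ h0T P0 hE.continuous (1 / Real.Gamma β) (wmap lam f) x -
          Phi hβ h0T P0 hE.continuous (1 / Real.Gamma β) (wmap lam g) x) := by
      simp only [hPsi, wmap_apply, smul_sub]
    rw [hdiff2, norm_smul, Real.norm_eq_abs, abs_of_nonneg (Real.exp_pos _).le]
    calc Real.exp (-lam * (x:ℝ)) * ‖Phi hβ h0T P0 hE.continuous (1 / Real.Gamma β)
          (wmap lam f) x - Phi hβ h0T P0 hE.continuous (1 / Real.Gamma β) (wmap lam g) x‖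
        ≤ Real.exp (-lam * (x:ℝ)) *
            ((K : ℝ) * dist f g * (1 / lam) ^ β * Real.exp (lam * (x:ℝ))) :=
          mul_le_mul_of_nonneg_left hest (Real.exp_pos _).le
      _ = (K : ℝ) * (1 / lam) ^ β * dist f g *
            Real.exp (-lam * (x:ℝ) + lam * (x:ℝ)) := by rw [Real.exp_add]; ring
      _ = (κ : ℝ) * dist f g := by
          rw [show -lam * (x:ℝ) + lam * (x:ℝ) = 0 by ring, Real.exp_zero, hfrac, hκcoe]
          ring
  set y := ContractingWith.fixedPoint Psi hcontr with hy_def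
  have hy : Psi y = y := hcontr.fixedPoint_isFixedPt
  set G := wmap lam y with hG
  have hGfix : Phi hβ h0T P0 hE.continuous (1 / Real.Gamma β) G = G := by
    have h1 := congrArg (wmap lam) hy
    rw [hPsi] at h1
    rwa [wmap_cancel] at h1
  refine ⟨Set.IccExtend h0T ⇑G, ⟨?_, ?_⟩, ?_⟩
  · exact (G.continuous.Icc_extend').continuousOn
  · intro t ht i
    have h1 : Set.IccExtend h0T ⇑G t = G ⟨t, ht⟩ := Set.IccExtend_of_mem h0T _ ht
    have h2 : G ⟨t, ht⟩ = P0 + (1 / Real.Gamma β) •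
        ∫ s in (0:ℝ)..t, (t - s) ^ (β - 1) • E (Set.IccExtend h0T ⇑G s) := by
      conv_lhs => rw [← hGfix]
      rfl
    have hgc : Continuous fun s => E (Set.IccExtend h0T ⇑G s) :=
      hE.continuous.comp G.continuous.Icc_extend'
    have happ := int_apply hβ hgc (ext_bound h0T hE.continuous G) t 0 t i
    rw [h1, h2, Pi.add_apply, Pi.smul_apply, smul_eq_mul, happ]
  · rintro Q ⟨hQc, hQeq⟩ t ht
    set q : C(Set.Icc (0:ℝ) T, Fin n → ℝ) := ⟨Set.restrict _ Q, hQc.restrict⟩ with hq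
    have hqfix : Phi hβ h0T P0 hE.continuous (1 / Real.Gamma β) q = q := by
      ext x i
      have hgq : Continuous fun s => E (Set.IccExtend h0T ⇑q s) :=
        hE.continuous.comp q.continuous.Icc_extend'
      have happ := int_apply hβ hgq (ext_bound h0T hE.continuous q) (x:ℝ) 0 (x:ℝ) i
      have hcong : (∫ s in (0:ℝ)..(x:ℝ), ((x:ℝ) - s) ^ (β - 1) *
            E (Set.IccExtend h0T ⇑q s) i)
          = ∫ s in (0:ℝ)..(x:ℝ), ((x:ℝ) - s) ^ (β - 1) * E (Q s) i := by
        refine intervalIntegral.integral_congr fun s hs => ?_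
        rw [Set.uIcc_of_le x.2.1] at hs
        have hsmem : s ∈ Set.Icc (0:ℝ) T := ⟨hs.1, le_trans hs.2 x.2.2⟩
        rw [Set.IccExtend_of_mem h0T _ hsmem]
        rfl
      have h2 : (Phi hβ h0T P0 hE.continuous (1 / Real.Gamma β) q) x
          = P0 + (1 / Real.Gamma β) •
            ∫ s in (0:ℝ)..(x:ℝ), ((x:ℝ) - s) ^ (β - 1) • E (Set.IccExtend h0T ⇑q s) := rfl
      rw [h2, Pi.add_apply, Pi.smul_apply, smul_eq_mul, happ, hcong]
      have h3 : q x i = Q (x:ℝ) i := rfl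
      rw [h3]
      exact (hQeq (x:ℝ) x.2 i).symm
    have hqpsi : Psi (wmap (-lam) q) = wmap (-lam) q := by
      rw [hPsi]
      show wmap (-lam) (Phi hβ h0T P0 hE.continuous (1 / Real.Gamma β)
        (wmap lam (wmap (-lam) q))) = wmap (-lam) q
      rw [wmap_cancel, hqfix]
    have huniq : wmap (-lam) q = y := hcontr.fixedPoint_unique hqpsi
    have hqG : q = G := by rw [hG, ← huniq, wmap_cancel]
    have h4 : Q t = q ⟨t, ht⟩ := rfl
    rw [h4, hqG]
    exact (Set.IccExtend_of_mem h0T _ ht).symm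
end

section
/- Let α ∈ (0,1), T > 0, and let g : [0,T] → ℝ be continuously differentiable. Then for every t ∈ (0,T], the function h(t) = ∫₀ᵗ (t−τ)^{−α} g(τ) dτ is differentiable at t with h'(t) = t^{−α} g(0) + ∫₀ᵗ (t−τ)^{−α} g'(τ) dτ. -/
open MeasureTheory intervalIntegral Set Filter Topology

namespace Stmt10Aux

/-- the antiderivative of `u ^ (-α)` -/
noncomputable def K (α u : ℝ) : ℝ := u ^ (1 - α) / (1 - α)

lemma K_cont {α : ℝ} (hα1 : α < 1) : Continuous (K α) :=
  (Real.continuous_rpow_const (by linarith)).div_const _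

lemma K_zero {α : ℝ} (hα1 : α < 1) : K α 0 = 0 := by
  simp [K, Real.zero_rpow (by linarith : (1:ℝ) - α ≠ 0)]

lemma K_deriv {α : ℝ} (hα1 : α < 1) {u : ℝ} (hu : u ≠ 0) :
    HasDerivAt (K α) (u ^ (-α)) u := by
  have h := (Real.hasDerivAt_rpow_const (p := 1 - α) (Or.inl hu)).div_const (1 - α)
  have h1 : (1 - α) * u ^ (1 - α - 1) / (1 - α) = u ^ (-α) := by
    rw [mul_div_cancel_left₀ _ (by linarith : (1:ℝ) - α ≠ 0)]
    congr 1
    ring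
  rw [h1] at h
  exact h

lemma kint {α : ℝ} (hα1 : α < 1) (c a b : ℝ) :
    IntervalIntegrable (fun τ => (c - τ) ^ (-α)) volume a b := by
  simpa using (intervalIntegrable_rpow' (a := c - a) (b := c - b)
    (by linarith : (-1:ℝ) < -α)).comp_sub_left c

lemma kint2 {α : ℝ} (hα1 : α < 1) (c a b : ℝ) :
    IntervalIntegrable (fun τ => (τ - c) ^ (-α)) volume a b := by
  simpa using (intervalIntegrable_rpow' (a := a - c) (b := b - c)
    (by linarith : (-1:ℝ) < -α)).comp_sub_right c

/-- FTC computation of `K` as an integral -/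
lemma K_eq_integral {α : ℝ} (hα0 : 0 < α) (hα1 : α < 1) {τ t : ℝ} (hτ : τ ≤ t) :
    ∫ s in τ..t, (s - τ) ^ (-α) = K α (t - τ) := by
  have := intervalIntegral.integral_comp_sub_right (a := τ) (b := t)
    (fun x => x ^ (-α)) τ
  rw [this, sub_self]
  rw [integral_rpow (Or.inl (by linarith : (-1:ℝ) < -α))]
  have h1 : -α + 1 = 1 - α := by ring
  rw [h1, Real.zero_rpow (by linarith : (1:ℝ) - α ≠ 0)]
  simp [K]

/-- Integration by parts for the singular-kernel convolution. -/
lemma ibp {α : ℝ} (hα0 : 0 < α) (hα1 : α < 1) {T : ℝ} (hT : 0 < T) (g g' : ℝ → ℝ)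
    (hg : ∀ t ∈ Icc (0:ℝ) T, HasDerivWithinAt g (g' t) (Icc 0 T) t)
    (hg' : ContinuousOn g' (Icc (0:ℝ) T)) {s : ℝ} (hs : s ∈ Icc (0:ℝ) T) :
    ∫ τ in (0:ℝ)..s, (s - τ) ^ (-α) * g τ
      = K α s * g 0 + ∫ τ in (0:ℝ)..s, K α (s - τ) * g' τ := by
  obtain ⟨hs0, hsT⟩ := hs
  have hgc : ContinuousOn g (Icc (0:ℝ) T) := fun x hx => (hg x hx).continuousWithinAt
  have hsub : Icc (0:ℝ) s ⊆ Icc 0 T := Icc_subset_Icc le_rfl hsT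
  have husub : uIcc (0:ℝ) s ⊆ Icc 0 T := by
    rw [uIcc_of_le hs0]; exact hsub
  have hKc : Continuous (fun τ => K α (s - τ)) :=
    (K_cont hα1).comp (continuous_const.sub continuous_id)
  have hint1 : IntervalIntegrable (fun τ => (s - τ) ^ (-α) * g τ) volume 0 s :=
    (kint hα1 s 0 s).mul_continuousOn (hgc.mono husub)
  have hint2 : IntervalIntegrable (fun τ => K α (s - τ) * g' τ) volume 0 s :=
    (hKc.continuousOn.mul (hg'.mono husub)).intervalIntegrable
  have key : ∫ τ in (0:ℝ)..s, ((s - τ) ^ (-α) * g τ - K α (s - τ) * g' τ)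
      = K α s * g 0 := by
    have hcont : ContinuousOn (fun τ => -(K α (s - τ) * g τ)) (Icc 0 s) :=
      ((hKc.continuousOn).mul (hgc.mono hsub)).neg
    have hderiv : ∀ x ∈ Ioo (0:ℝ) s,
        HasDerivWithinAt (fun τ => -(K α (s - τ) * g τ))
          ((s - x) ^ (-α) * g x - K α (s - x) * g' x) (Ioi x) x := by
      intro x hx
      have hxT : x ∈ Ioo (0:ℝ) T := ⟨hx.1, lt_of_lt_of_le hx.2 hsT⟩
      have hgx : HasDerivAt g (g' x) x := by
        have := hg x ⟨le_of_lt hxT.1, le_of_lt hxT.2⟩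
        exact this.hasDerivAt (Icc_mem_nhds hxT.1 hxT.2)
      have hKx : HasDerivAt (fun τ => K α (s - τ)) (-(s - x) ^ (-α)) x := by
        have h1 : HasDerivAt (fun τ : ℝ => s - τ) (-1) x := by
          simpa using (hasDerivAt_id x).const_sub s
        have h2 := (K_deriv hα1 (ne_of_gt (by linarith [hx.2] : (0:ℝ) < s - x))).comp x h1
        simpa [mul_comm, Function.comp_def] using h2
      have := ((hKx.mul hgx).neg)
      have heq : -((-(s - x) ^ (-α)) * g x + K α (s - x) * g' x)
          = (s - x) ^ (-α) * g x - K α (s - x) * g' x := by ring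
      rw [heq] at this
      exact this.hasDerivWithinAt
    have hii : IntervalIntegrable
        (fun τ => (s - τ) ^ (-α) * g τ - K α (s - τ) * g' τ) volume 0 s :=
      hint1.sub hint2
    have := integral_eq_sub_of_hasDeriv_right_of_le hs0 hcont hderiv hii
    rw [this]
    simp [K_zero hα1, sub_self]
  rw [intervalIntegral.integral_sub hint1 hint2] at key
  linarith [key]

/-- Fubini step: the convolution with `K` is the primitive of the convolution
with the singular kernel. -/
lemma fubini {α : ℝ} (hα0 : 0 < α) (hα1 : α < 1) (G' : ℝ → ℝ) (hG' : Continuous G')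
    {t : ℝ} (ht : 0 ≤ t) :
    ∫ τ in (0:ℝ)..t, K α (t - τ) * G' τ
      = ∫ s in (0:ℝ)..t, (∫ τ in (0:ℝ)..s, (s - τ) ^ (-α) * G' τ) := by
  set μ := volume.restrict (Ioc (0:ℝ) t) with hμ
  set F : ℝ × ℝ → ℝ := fun p => if p.1 < p.2 then (p.2 - p.1) ^ (-α) * G' p.1 else 0
    with hF
  have hFmeas : Measurable F := by
    apply Measurable.ite (measurableSet_lt measurable_fst measurable_snd)
    · exact ((measurable_snd.sub measurable_fst).pow_const (-α)).mul
        (hG'.measurable.comp measurable_fst)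
    · exact measurable_const
  have hsec : ∀ τ : ℝ, (fun s => F (τ, s))
      = (Ioi τ).indicator (fun s => (s - τ) ^ (-α) * G' τ) := by
    intro τ; funext s
    simp only [hF, indicator_apply, mem_Ioi]
  have hres : ∀ τ ∈ Ioc (0:ℝ) t, μ.restrict (Ioi τ) = volume.restrict (Ioc τ t) := by
    intro τ hτ
    rw [hμ, Measure.restrict_restrict measurableSet_Ioi]
    congr 1
    ext x
    simp only [mem_inter_iff, mem_Ioi, mem_Ioc]
    constructor
    · rintro ⟨h1, _, h3⟩; exact ⟨h1, h3⟩
    · rintro ⟨h1, h2⟩; exact ⟨h1, lt_trans hτ.1 h1, h2⟩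
  have hker : ∀ τ ∈ Ioc (0:ℝ) t, IntegrableOn (fun s => (s - τ) ^ (-α)) (Ioc τ t) := by
    intro τ hτ
    exact (intervalIntegrable_iff_integrableOn_Ioc_of_le hτ.2).mp (kint2 hα1 τ τ t)
  have hinner_s : ∀ τ ∈ Ioc (0:ℝ) t, ∫ s, F (τ, s) ∂μ = K α (t - τ) * G' τ := by
    intro τ hτ
    rw [hsec τ, MeasureTheory.integral_indicator measurableSet_Ioi, hres τ hτ,
      MeasureTheory.integral_mul_const, ← intervalIntegral.integral_of_le hτ.2,
      K_eq_integral hα0 hα1 hτ.2]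
  have hnormsec : ∀ τ : ℝ, (fun s => ‖F (τ, s)‖)
      = (Ioi τ).indicator (fun s => (s - τ) ^ (-α) * ‖G' τ‖) := by
    intro τ; funext s
    by_cases h : τ < s
    · simp only [hF, indicator_apply, mem_Ioi, if_pos h, norm_mul]
      rw [Real.norm_of_nonneg (Real.rpow_nonneg (by linarith) _)]
    · simp [hF, indicator_apply, mem_Ioi, if_neg h, h]
  have hsecint : ∀ τ ∈ Ioc (0:ℝ) t, Integrable (fun s => F (τ, s)) μ := by
    intro τ hτ
    rw [hsec τ, hμ, integrable_indicator_iff measurableSet_Ioi]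
    rw [IntegrableOn, Measure.restrict_restrict measurableSet_Ioi]
    have : Ioi τ ∩ Ioc 0 t = Ioc τ t := by
      ext x
      simp only [mem_inter_iff, mem_Ioi, mem_Ioc]
      exact ⟨fun ⟨h1, _, h3⟩ => ⟨h1, h3⟩, fun ⟨h1, h2⟩ => ⟨h1, lt_trans hτ.1 h1, h2⟩⟩
    rw [this]
    exact (hker τ hτ).mul_const _
  have hnormint : ∀ τ ∈ Ioc (0:ℝ) t, ∫ s, ‖F (τ, s)‖ ∂μ = K α (t - τ) * ‖G' τ‖ := by
    intro τ hτ
    calc ∫ s, ‖F (τ, s)‖ ∂μ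
        = ∫ s, (Ioi τ).indicator (fun s => (s - τ) ^ (-α) * ‖G' τ‖) s ∂μ := by
          rw [← hnormsec τ]
      _ = K α (t - τ) * ‖G' τ‖ := by
          rw [MeasureTheory.integral_indicator measurableSet_Ioi, hres τ hτ,
            MeasureTheory.integral_mul_const, ← intervalIntegral.integral_of_le hτ.2,
            K_eq_integral hα0 hα1 hτ.2]
  have hprod : Integrable F (μ.prod μ) := by
    refine (integrable_prod_iff hFmeas.aestronglyMeasurable).mpr ⟨?_, ?_⟩
    · filter_upwards [ae_restrict_mem measurableSet_Ioc] with τ hτ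
      exact hsecint τ hτ
    · apply MeasureTheory.Integrable.mono'
        (g := fun τ => K α (t - τ) * ‖G' τ‖) ?_ ?_ ?_
      · apply Continuous.integrableOn_Ioc
        exact ((K_cont hα1).comp (continuous_const.sub continuous_id)).mul hG'.norm
      · exact (hFmeas.aestronglyMeasurable.norm.integral_prod_right')
      · filter_upwards [ae_restrict_mem measurableSet_Ioc] with τ hτ
        rw [Real.norm_of_nonneg (integral_nonneg fun s => norm_nonneg _)]
        exact le_of_eq (hnormint τ hτ)
  have hswap := MeasureTheory.integral_integral_swap (μ := μ) (ν := μ)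
    (f := fun τ s => F (τ, s)) hprod
  have hinner_τ : ∀ s ∈ Ioc (0:ℝ) t, ∫ τ, F (τ, s) ∂μ
      = ∫ τ in (0:ℝ)..s, (s - τ) ^ (-α) * G' τ := by
    intro s hs
    have hfun : (fun τ => F (τ, s)) = (Iio s).indicator (fun τ => (s - τ) ^ (-α) * G' τ) := by
      funext τ
      simp only [hF, indicator_apply, mem_Iio]
    rw [hfun, MeasureTheory.integral_indicator measurableSet_Iio, hμ,
      Measure.restrict_restrict measurableSet_Iio]
    have hset : Iio s ∩ Ioc 0 t = Ioo 0 s := by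
      ext x
      simp only [mem_inter_iff, mem_Iio, mem_Ioc, mem_Ioo]
      exact ⟨fun ⟨h1, h2, _⟩ => ⟨h2, h1⟩,
        fun ⟨h1, h2⟩ => ⟨h2, h1, le_trans (le_of_lt h2) hs.2⟩⟩
    rw [hset, ← MeasureTheory.integral_Ioc_eq_integral_Ioo,
      ← intervalIntegral.integral_of_le (le_of_lt hs.1)]
  calc ∫ τ in (0:ℝ)..t, K α (t - τ) * G' τ
      = ∫ τ, K α (t - τ) * G' τ ∂μ := by
        rw [intervalIntegral.integral_of_le ht, hμ]
    _ = ∫ τ, (∫ s, F (τ, s) ∂μ) ∂μ := by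
        refine integral_congr_ae ?_
        filter_upwards [ae_restrict_mem measurableSet_Ioc] with τ hτ
        exact (hinner_s τ hτ).symm
    _ = ∫ s, (∫ τ, F (τ, s) ∂μ) ∂μ := hswap
    _ = ∫ s, (∫ τ in (0:ℝ)..s, (s - τ) ^ (-α) * G' τ) ∂μ := by
        refine integral_congr_ae ?_
        filter_upwards [ae_restrict_mem measurableSet_Ioc] with s hs
        exact hinner_τ s hs
    _ = ∫ s in (0:ℝ)..t, (∫ τ in (0:ℝ)..s, (s - τ) ^ (-α) * G' τ) := by
        rw [intervalIntegral.integral_of_le ht, hμ]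

/-- Continuity of the fractional integral of a bounded continuous function. -/
lemma psi_cont {α : ℝ} (hα0 : 0 < α) (hα1 : α < 1) (G' : ℝ → ℝ) (hG' : Continuous G')
    (M : ℝ) (hM : ∀ x, ‖G' x‖ ≤ M) {T : ℝ} (hT : 0 < T) :
    ContinuousOn (fun s => ∫ τ in (0:ℝ)..s, (s - τ) ^ (-α) * G' τ) (Icc 0 T) := by
  have hM0 : 0 ≤ M := le_trans (norm_nonneg (G' 0)) (hM 0)
  have hcv : ∀ s : ℝ, (∫ τ in (0:ℝ)..s, (s - τ) ^ (-α) * G' τ)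
      = ∫ u in (0:ℝ)..s, u ^ (-α) * G' (s - u) := by
    intro s
    have h := intervalIntegral.integral_comp_sub_left (a := (0:ℝ)) (b := s)
      (fun u => u ^ (-α) * G' (s - u)) s
    simp only [sub_sub_cancel, sub_zero, sub_self] at h
    exact h
  set F : ℝ → ℝ → ℝ := fun s u => (Ioc (0:ℝ) s).indicator
    (fun u => u ^ (-α) * G' (s - u)) u with hFdef
  have hrep : ∀ s ∈ Icc (0:ℝ) T,
      (∫ τ in (0:ℝ)..s, (s - τ) ^ (-α) * G' τ) = ∫ u, F s u := by
    intro s hs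
    rw [hcv, intervalIntegral.integral_of_le hs.1,
      ← MeasureTheory.integral_indicator measurableSet_Ioc]
  intro t₀ ht₀
  rw [ContinuousWithinAt]
  have hev : ∀ᶠ s in 𝓝[Icc (0:ℝ) T] t₀, (∫ u, F s u)
      = ∫ τ in (0:ℝ)..s, (s - τ) ^ (-α) * G' τ := by
    filter_upwards [eventually_mem_nhdsWithin] with s hs
    exact (hrep s hs).symm
  rw [hrep t₀ ht₀]
  refine Tendsto.congr' hev ?_
  refine MeasureTheory.tendsto_integral_filter_of_dominated_convergence
    (bound := (Ioc (0:ℝ) T).indicator (fun u => u ^ (-α) * M)) ?_ ?_ ?_ ?_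
  · refine Eventually.of_forall (fun s => ?_)
    exact (((measurable_id.pow_const (-α)).mul
      (hG'.measurable.comp (measurable_const.sub measurable_id))).indicator
      measurableSet_Ioc).aestronglyMeasurable
  · filter_upwards [eventually_mem_nhdsWithin] with s hs
    refine ae_of_all _ (fun u => ?_)
    by_cases hu : u ∈ Ioc (0:ℝ) s
    · have huT : u ∈ Ioc (0:ℝ) T := ⟨hu.1, le_trans hu.2 hs.2⟩
      rw [hFdef]
      simp only [indicator_of_mem hu, indicator_of_mem huT]
      rw [norm_mul, Real.norm_of_nonneg (Real.rpow_nonneg hu.1.le _)]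
      exact mul_le_mul_of_nonneg_left (hM _) (Real.rpow_nonneg hu.1.le _)
    · rw [hFdef]
      simp only [indicator_of_notMem hu, norm_zero]
      refine indicator_nonneg (fun u hu' => ?_) u
      exact mul_nonneg (Real.rpow_nonneg hu'.1.le _) hM0
  · rw [integrable_indicator_iff measurableSet_Ioc]
    exact (intervalIntegrable_iff_integrableOn_Ioc_of_le hT.le).mp
      ((intervalIntegrable_rpow' (by linarith : (-1:ℝ) < -α)).mul_const M)
  · have h0 : ∀ᵐ u : ℝ, u ≠ 0 := by
      refine compl_mem_ae_iff.mpr ?_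
      exact measure_mono_null (fun x hx => hx) (measure_singleton (0:ℝ))
    have ht0' : ∀ᵐ u : ℝ, u ≠ t₀ := by
      refine compl_mem_ae_iff.mpr ?_
      exact measure_mono_null (fun x hx => hx) (measure_singleton t₀)
    filter_upwards [h0, ht0'] with u hu0 hut₀
    rcases le_or_gt u 0 with hle | hpos
    · have hzero : ∀ s : ℝ, F s u = 0 := by
        intro s
        rw [hFdef]
        exact indicator_of_notMem (fun hmem => absurd hmem.1 (not_lt.mpr hle))
          (fun u => u ^ (-α) * G' (s - u))
      simp only [hzero]
      exact tendsto_const_nhds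
    · rcases lt_or_gt_of_ne hut₀ with hlt | hgt
      · have hvalt₀ : F t₀ u = u ^ (-α) * G' (t₀ - u) :=
          indicator_of_mem (show u ∈ Ioc (0:ℝ) t₀ from ⟨hpos, hlt.le⟩)
            (fun u => u ^ (-α) * G' (t₀ - u))
        have hev2 : ∀ᶠ s in 𝓝[Icc (0:ℝ) T] t₀,
            u ^ (-α) * G' (s - u) = F s u := by
          have : ∀ᶠ s in 𝓝 t₀, u < s := eventually_gt_nhds hlt
          filter_upwards [nhdsWithin_le_nhds this] with s hs
          exact (indicator_of_mem (show u ∈ Ioc (0:ℝ) s from ⟨hpos, hs.le⟩)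
            (fun u => u ^ (-α) * G' (s - u))).symm
        rw [hvalt₀]
        refine Tendsto.congr' hev2 ?_
        have : Continuous (fun s => u ^ (-α) * G' (s - u)) :=
          continuous_const.mul (hG'.comp (continuous_id.sub continuous_const))
        exact (this.tendsto t₀).mono_left nhdsWithin_le_nhds
      · have hvalt₀ : F t₀ u = 0 :=
          indicator_of_notMem (fun hmem => absurd hmem.2 (not_le.mpr hgt))
            (fun u => u ^ (-α) * G' (t₀ - u))
        have hev2 : ∀ᶠ s in 𝓝[Icc (0:ℝ) T] t₀, (0:ℝ) = F s u := by
          have : ∀ᶠ s in 𝓝 t₀, s < u := eventually_lt_nhds hgt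
          filter_upwards [nhdsWithin_le_nhds this] with s hs
          exact (indicator_of_notMem (fun hmem => absurd hmem.2 (not_le.mpr hs))
            (fun u => u ^ (-α) * G' (s - u))).symm
        rw [hvalt₀]
        exact Tendsto.congr' hev2 tendsto_const_nhds

end Stmt10Aux

open Stmt10Aux

/-- **Leibniz rule for convolution with the weakly singular kernel
`(t−τ)^{−α}`.** -/
theorem stmt_10 (α T : ℝ) (hα : α ∈ Set.Ioo (0:ℝ) 1) (hT : 0 < T)
    (g g' : ℝ → ℝ)
    (hg : ∀ t ∈ Set.Icc (0:ℝ) T, HasDerivWithinAt g (g' t) (Set.Icc 0 T) t)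
    (hg' : ContinuousOn g' (Set.Icc (0:ℝ) T)) :
    ∀ t ∈ Set.Ioc (0:ℝ) T,
      HasDerivWithinAt (fun t' => ∫ τ in (0:ℝ)..t', (t' - τ) ^ (-α) * g τ)
        (t ^ (-α) * g 0 + ∫ τ in (0:ℝ)..t, (t - τ) ^ (-α) * g' τ)
        (Set.Icc 0 T) t := by
  obtain ⟨hα0, hα1⟩ := hα
  intro t ht
  have htmem : t ∈ Icc (0:ℝ) T := ⟨ht.1.le, ht.2⟩
  -- clamp extension of g'
  set G' : ℝ → ℝ := fun x => g' (min T (max x 0)) with hG'def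
  have hclamp : ∀ x : ℝ, min T (max x 0) ∈ Icc (0:ℝ) T := fun x =>
    ⟨le_min hT.le (le_max_right x 0), min_le_left _ _⟩
  have hG'c : Continuous G' :=
    hg'.comp_continuous (continuous_const.min (continuous_id.max continuous_const)) hclamp
  have hG'eq : ∀ τ ∈ Icc (0:ℝ) T, G' τ = g' τ := by
    intro τ hτ
    rw [hG'def]
    simp only
    rw [max_eq_left hτ.1, min_eq_right hτ.2]
  obtain ⟨M, hMb⟩ := isCompact_Icc.exists_bound_of_continuousOn hg'
  have hM : ∀ x, ‖G' x‖ ≤ M := fun x => hMb _ (hclamp x)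
  -- the fractional integral of G'
  set ψ : ℝ → ℝ := fun s => ∫ τ in (0:ℝ)..s, (s - τ) ^ (-α) * G' τ with hψdef
  have hψc : ContinuousOn ψ (Icc 0 T) := psi_cont hα0 hα1 G' hG'c M hM hT
  -- congruence: the convolution equals K t' * g 0 + primitive of ψ
  have hcong : ∀ t' ∈ Icc (0:ℝ) T,
      (∫ τ in (0:ℝ)..t', (t' - τ) ^ (-α) * g τ)
        = K α t' * g 0 + ∫ s in (0:ℝ)..t', ψ s := by
    intro t' ht'
    rw [ibp hα0 hα1 hT g g' hg hg' ht']
    congr 1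
    have heq1 : (∫ τ in (0:ℝ)..t', K α (t' - τ) * g' τ)
        = ∫ τ in (0:ℝ)..t', K α (t' - τ) * G' τ := by
      refine intervalIntegral.integral_congr (fun τ hτ => ?_)
      rw [uIcc_of_le ht'.1] at hτ
      rw [hG'eq τ ⟨hτ.1, le_trans hτ.2 ht'.2⟩]
    rw [heq1, fubini hα0 hα1 G' hG'c ht'.1]
  -- derivative of the two pieces
  have hKd : HasDerivWithinAt (fun t' => K α t' * g 0) (t ^ (-α) * g 0) (Icc 0 T) t :=
    ((K_deriv hα1 (ne_of_gt ht.1)).mul_const (g 0)).hasDerivWithinAt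
  haveI : Fact (t ∈ Icc (0:ℝ) T) := ⟨htmem⟩
  have hψint : IntervalIntegrable ψ volume 0 t :=
    (hψc.mono (by rw [uIcc_of_le ht.1.le]; exact Icc_subset_Icc le_rfl ht.2)).intervalIntegrable
  have hmeasAt : StronglyMeasurableAtFilter ψ (𝓝[Icc (0:ℝ) T] t) volume :=
    ⟨Icc 0 T, self_mem_nhdsWithin, hψc.aestronglyMeasurable measurableSet_Icc⟩
  have hint_d : HasDerivWithinAt (fun t' => ∫ s in (0:ℝ)..t', ψ s) (ψ t) (Icc 0 T) t :=
    intervalIntegral.integral_hasDerivWithinAt_right hψint hmeasAt (hψc t htmem)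
  have hsum := hKd.add hint_d
  have hfinal : HasDerivWithinAt (fun t' => ∫ τ in (0:ℝ)..t', (t' - τ) ^ (-α) * g τ)
      (t ^ (-α) * g 0 + ψ t) (Icc 0 T) t :=
    hsum.congr (fun x hx => hcong x hx) (hcong t htmem)
  have hψt : ψ t = ∫ τ in (0:ℝ)..t, (t - τ) ^ (-α) * g' τ := by
    refine intervalIntegral.integral_congr (fun τ hτ => ?_)
    rw [uIcc_of_le ht.1.le] at hτ
    rw [hG'eq τ ⟨hτ.1, le_trans hτ.2 ht.2⟩]
  rw [← hψt]
  exact hfinal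
end
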